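/- arXiv:2008.11072 — 7 statements merged into one kernel-verified Lean document; each statement's English description precedes it below -/
import Mathlib

section
/- Let (X, d) be a metric space with diam(X) ≤ K for some constant K > 0, let θ ∈ (0,1), C > 0 and κ > 0, and let Φ'_n, Φ''_n : X → X (n ≥ 1) be two families of maps such that d(Φ'_n(x₁), Φ'_n(x₂)) ≤ θ d(x₁, x₂) and d(Φ''_n(x₁), Φ''_n(x₂)) ≤ θ d(x₁, x₂) for all x₁, x₂ ∈ X and all n, and d(Φ'_n(x), Φ''_n(x)) ≤ C/n^κ for all x ∈ X and all n. Then there exists a constant C̄ (depending only on K, θ, C, κ) such that for all n ≥ 1 and all x', x'' ∈ X: d(Φ'_n ∘ Φ'_{n−1} ∘ ⋯ ∘ Φ'_1(x'), Φ''_n ∘ Φ''_{n−1} ∘ ⋯ ∘ Φ''_1(x'')) ≤ C̄/n^κ. -/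
/-- The composition `Φ_n ∘ Φ_{n-1} ∘ ⋯ ∘ Φ_1` (the empty composition is the identity). -/
def iterComp {X : Type*} (Φ : ℕ → X → X) : ℕ → X → X
  | 0 => id
  | n + 1 => Φ (n + 1) ∘ iterComp Φ n

/-- Stability of compositions of contractions under slowly decaying
perturbations (Proposition C.7). -/
theorem contraction_composition_stability (K θ C κ : ℝ)
    (hK : 0 < K) (hθ0 : 0 < θ) (hθ1 : θ < 1) (hC : 0 < C) (hκ : 0 < κ) :
    ∃ Cbar : ℝ,
      ∀ (X : Type) (_ : MetricSpace X),
        (∀ x y : X, dist x y ≤ K) →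
        ∀ Φ' Φ'' : ℕ → X → X,
          (∀ n : ℕ, 1 ≤ n → ∀ x₁ x₂ : X, dist (Φ' n x₁) (Φ' n x₂) ≤ θ * dist x₁ x₂) →
          (∀ n : ℕ, 1 ≤ n → ∀ x₁ x₂ : X, dist (Φ'' n x₁) (Φ'' n x₂) ≤ θ * dist x₁ x₂) →
          (∀ n : ℕ, 1 ≤ n → ∀ x : X, dist (Φ' n x) (Φ'' n x) ≤ C / (n : ℝ) ^ κ) →
          ∀ n : ℕ, 1 ≤ n → ∀ x' x'' : X,
            dist (iterComp Φ' n x') (iterComp Φ'' n x'') ≤ Cbar / (n : ℝ) ^ κ := by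
  set m := ⌈κ⌉₊ with hm
  have hκm : κ ≤ (m : ℝ) := Nat.le_ceil κ
  have hsum : Summable (fun j : ℕ => θ ^ j * ((j : ℝ) + 1) ^ κ) := by
    have h1 : Summable (fun j : ℕ => ((j : ℝ)) ^ m * θ ^ j) := by
      apply summable_pow_mul_geometric_of_norm_lt_one
      rw [Real.norm_eq_abs, abs_of_pos hθ0]; exact hθ1
    have h2 : Summable (fun j : ℕ => ((j : ℝ) + 1) ^ m * θ ^ (j + 1)) := by
      have := (summable_nat_add_iff 1).mpr h1
      simpa using this
    have h3 : Summable (fun j : ℕ => θ⁻¹ * (((j : ℝ) + 1) ^ m * θ ^ (j + 1))) :=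
      h2.mul_left _
    apply Summable.of_nonneg_of_le (fun j => by positivity) _ h3
    intro j
    have hj1 : (1 : ℝ) ≤ (j : ℝ) + 1 := by
      have : (0:ℝ) ≤ (j:ℝ) := Nat.cast_nonneg j
      linarith
    have hle : ((j : ℝ) + 1) ^ κ ≤ ((j : ℝ) + 1) ^ (m : ℝ) :=
      Real.rpow_le_rpow_of_exponent_le hj1 hκm
    rw [Real.rpow_natCast] at hle
    calc θ ^ j * ((j : ℝ) + 1) ^ κ ≤ θ ^ j * ((j : ℝ) + 1) ^ m := by
          have : (0:ℝ) ≤ θ ^ j := by positivity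
          nlinarith
      _ = θ⁻¹ * (((j : ℝ) + 1) ^ m * θ ^ (j + 1)) := by
          rw [pow_succ]; field_simp
  set S := ∑' j : ℕ, θ ^ j * ((j : ℝ) + 1) ^ κ with hS
  have hS0 : 0 ≤ S := tsum_nonneg (fun j => by positivity)
  refine ⟨(K + C) * S, ?_⟩
  intro X _ hdiam Φ' Φ'' h1 h2 h3 n hn x' x''
  have hnR : (0:ℝ) < (n:ℝ) := by exact_mod_cast hn
  have hnκ : (0:ℝ) < (n:ℝ) ^ κ := Real.rpow_pos_of_pos hnR κ
  -- the inductive bound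
  have key : ∀ N : ℕ, dist (iterComp Φ' N x') (iterComp Φ'' N x'') ≤
      θ ^ N * K + ∑ j ∈ Finset.range N, θ ^ (N - 1 - j) * (C / ((j : ℝ) + 1) ^ κ) := by
    intro N
    induction N with
    | zero => simpa [iterComp] using hdiam x' x''
    | succ N ih =>
      have t1 := h1 (N+1) (by omega) (iterComp Φ' N x') (iterComp Φ'' N x'')
      have t2 := h3 (N+1) (by omega) (iterComp Φ'' N x'')
      have t2' : dist (Φ' (N+1) (iterComp Φ'' N x'')) (Φ'' (N+1) (iterComp Φ'' N x''))
          ≤ C / ((N:ℝ) + 1) ^ κ := by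
        convert t2 using 3; push_cast; ring
      have step : dist (iterComp Φ' (N+1) x') (iterComp Φ'' (N+1) x'') ≤
          θ * dist (iterComp Φ' N x') (iterComp Φ'' N x'') + C / ((N:ℝ) + 1) ^ κ := by
        calc dist (iterComp Φ' (N+1) x') (iterComp Φ'' (N+1) x'')
            ≤ dist (Φ' (N+1) (iterComp Φ' N x')) (Φ' (N+1) (iterComp Φ'' N x''))
              + dist (Φ' (N+1) (iterComp Φ'' N x'')) (Φ'' (N+1) (iterComp Φ'' N x'')) := by
              simp only [iterComp, Function.comp_apply]
              exact dist_triangle _ _ _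
          _ ≤ θ * dist (iterComp Φ' N x') (iterComp Φ'' N x'') + C / ((N:ℝ)+1)^κ := by
              exact add_le_add t1 t2'
      have hmul : θ * ∑ j ∈ Finset.range N, θ ^ (N - 1 - j) * (C / ((j : ℝ) + 1) ^ κ)
          = ∑ j ∈ Finset.range N, θ ^ (N - j) * (C / ((j : ℝ) + 1) ^ κ) := by
        rw [Finset.mul_sum]
        apply Finset.sum_congr rfl
        intro j hj
        rw [Finset.mem_range] at hj
        rw [← mul_assoc, ← pow_succ']
        congr 2
        omega
      calc dist (iterComp Φ' (N+1) x') (iterComp Φ'' (N+1) x'')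
          ≤ θ * (θ ^ N * K + ∑ j ∈ Finset.range N, θ ^ (N - 1 - j) * (C / ((j : ℝ) + 1) ^ κ))
            + C / ((N:ℝ) + 1) ^ κ := by
            refine le_trans step ?_
            have hd : (0:ℝ) ≤ dist (iterComp Φ' N x') (iterComp Φ'' N x'') := dist_nonneg
            nlinarith [mul_le_mul_of_nonneg_left ih hθ0.le]
        _ = θ ^ (N+1) * K + ∑ j ∈ Finset.range (N+1), θ ^ (N + 1 - 1 - j) * (C / ((j : ℝ) + 1) ^ κ) := by
            rw [mul_add, hmul, Finset.sum_range_succ]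
            simp only [Nat.add_sub_cancel, Nat.sub_self, pow_zero, one_mul]
            rw [pow_succ']
            ring
  -- bound the sum
  have g_nonneg : ∀ i : ℕ, (0:ℝ) ≤ θ ^ i * ((i : ℝ) + 1) ^ κ := fun i => by positivity
  have hterm : ∀ j ∈ Finset.range n, θ ^ (n - 1 - j) * (C / ((j : ℝ) + 1) ^ κ)
      ≤ (θ ^ (n-1-j) * (((n-1-j : ℕ) : ℝ) + 1) ^ κ) * (C / (n:ℝ) ^ κ) := by
    intro j hj
    rw [Finset.mem_range] at hj
    have hcastnat : (n - 1 - j : ℕ) = n - (j+1) := by omega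
    have hcast : (((n - 1 - j : ℕ)) : ℝ) + 1 = (n:ℝ) - (j:ℝ) := by
      rw [hcastnat, Nat.cast_sub (by omega)]
      push_cast; ring
    have hjn : (j:ℝ) + 1 ≤ (n:ℝ) := by exact_mod_cast hj
    have hprod : (n:ℝ) ≤ ((j:ℝ) + 1) * ((n:ℝ) - (j:ℝ)) := by nlinarith
    have hrp := Real.rpow_le_rpow (le_of_lt hnR) hprod hκ.le
    rw [Real.mul_rpow (by positivity) (by linarith)] at hrp
    have hjκ : (0:ℝ) < ((j:ℝ) + 1) ^ κ := Real.rpow_pos_of_pos (by positivity) κ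
    have hnjκ : (0:ℝ) ≤ ((n:ℝ) - (j:ℝ)) ^ κ := Real.rpow_nonneg (by linarith) κ
    have hdiv : C / ((j : ℝ) + 1) ^ κ ≤ ((n:ℝ) - (j:ℝ)) ^ κ * (C / (n:ℝ) ^ κ) := by
      rw [div_le_iff₀ hjκ]
      have heq : ((n:ℝ)-(j:ℝ))^κ * (C/(n:ℝ)^κ) * (((j:ℝ)+1))^κ
          = C * (((j:ℝ)+1)^κ * ((n:ℝ)-(j:ℝ))^κ) / (n:ℝ)^κ := by ring
      rw [heq, le_div_iff₀ hnκ]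
      nlinarith [mul_le_mul_of_nonneg_left hrp hC.le]
    calc θ ^ (n - 1 - j) * (C / ((j : ℝ) + 1) ^ κ)
        ≤ θ ^ (n-1-j) * (((n:ℝ) - (j:ℝ)) ^ κ * (C / (n:ℝ) ^ κ)) := by
          apply mul_le_mul_of_nonneg_left hdiv (by positivity)
      _ = (θ ^ (n-1-j) * (((n-1-j : ℕ) : ℝ) + 1) ^ κ) * (C / (n:ℝ) ^ κ) := by
          rw [hcast]; ring
  have sum_le : ∑ j ∈ Finset.range n, θ ^ (n - 1 - j) * (C / ((j : ℝ) + 1) ^ κ)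
      ≤ (C / (n:ℝ) ^ κ) * S := by
    calc ∑ j ∈ Finset.range n, θ ^ (n - 1 - j) * (C / ((j : ℝ) + 1) ^ κ)
        ≤ ∑ j ∈ Finset.range n, (θ ^ (n-1-j) * (((n-1-j : ℕ) : ℝ) + 1) ^ κ) * (C / (n:ℝ) ^ κ) :=
          Finset.sum_le_sum hterm
      _ = (∑ j ∈ Finset.range n, θ ^ (n-1-j) * (((n-1-j : ℕ) : ℝ) + 1) ^ κ) * (C / (n:ℝ) ^ κ) := by
          rw [Finset.sum_mul]
      _ = (∑ j ∈ Finset.range n, θ ^ j * ((j : ℝ) + 1) ^ κ) * (C / (n:ℝ) ^ κ) := by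
          rw [Finset.sum_range_reflect (fun i => θ ^ i * ((i : ℝ) + 1) ^ κ) n]
      _ ≤ S * (C / (n:ℝ) ^ κ) := by
          apply mul_le_mul_of_nonneg_right _ (by positivity)
          exact Summable.sum_le_tsum (Finset.range n) (fun i _ => g_nonneg i) hsum
      _ = (C / (n:ℝ) ^ κ) * S := by ring
  -- bound θ^n * K
  have geom_le : θ ^ n * K ≤ K * S / (n:ℝ) ^ κ := by
    have h1 : θ ^ n * (n:ℝ) ^ κ ≤ θ ^ n * ((n:ℝ) + 1) ^ κ := by
      apply mul_le_mul_of_nonneg_left _ (by positivity)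
      exact Real.rpow_le_rpow (le_of_lt hnR) (by linarith) hκ.le
    have h2 : θ ^ n * ((n:ℝ) + 1) ^ κ ≤ S := Summable.le_tsum hsum n (fun i _ => g_nonneg i)
    rw [le_div_iff₀ hnκ]
    calc θ ^ n * K * (n:ℝ) ^ κ = K * (θ ^ n * (n:ℝ) ^ κ) := by ring
      _ ≤ K * S := by nlinarith
  calc dist (iterComp Φ' n x') (iterComp Φ'' n x'')
      ≤ θ ^ n * K + ∑ j ∈ Finset.range n, θ ^ (n - 1 - j) * (C / ((j : ℝ) + 1) ^ κ) := key n
    _ ≤ K * S / (n:ℝ) ^ κ + (C / (n:ℝ) ^ κ) * S := add_le_add geom_le sum_le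
    _ = (K + C) * S / (n:ℝ) ^ κ := by field_simp
end

section
/- Fix an integer m ≥ 1 and ε̄ > 0. Let (A_n)_{n∈ℤ} be a sequence of m×m matrices with A_n(i,j) ≥ ε̄ for all i,j and ‖A_n‖ ≤ (m ε̄)^{−1} for all n, where ‖A‖ = max_i Σ_j |A(i,j)|. Then there exist nonnegative vectors v_n ∈ ℝ^m with ‖v_n‖ = 1, and constants C > 0, θ ∈ (0,1), such that for every pair of integers a < n and every nonnegative vector ṽ ∈ ℝ^m with ‖ṽ‖ = 1, one has ‖ v_n − (A_n A_{n−1} ⋯ A_{a+1} ṽ)/‖A_n A_{n−1} ⋯ A_{a+1} ṽ‖ ‖ ≤ C θ^{n−a}. In particular, the limit v_n = lim_{a→−∞} (A_n ⋯ A_{a+1} ṽ_a)/‖A_n ⋯ A_{a+1} ṽ_a‖ exists and is independent of any choice of nonnegative unit vectors ṽ_a. -/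
open Filter

/-- `prodApply A a k v = A_{a+k} ⋯ A_{a+1} v`. -/
def prodApply {m : ℕ} (A : ℤ → Matrix (Fin m) (Fin m) ℝ) (a : ℤ) :
    ℕ → (Fin m → ℝ) → (Fin m → ℝ)
  | 0, v => v
  | k + 1, v => (A (a + k + 1)).mulVec (prodApply A a k v)

section aux

variable {m : ℕ} (A : ℤ → Matrix (Fin m) (Fin m) ℝ)

theorem prodApply_zero (a : ℤ) (v : Fin m → ℝ) : prodApply A a 0 v = v := rfl

theorem prodApply_succ (a : ℤ) (k : ℕ) (v : Fin m → ℝ) :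
    prodApply A a (k + 1) v = (A (a + k + 1)).mulVec (prodApply A a k v) := rfl

theorem prodApply_smul (a : ℤ) (k : ℕ) (t : ℝ) (v : Fin m → ℝ) :
    prodApply A a k (t • v) = t • prodApply A a k v := by
  induction k with
  | zero => rfl
  | succ k ih => rw [prodApply_succ, prodApply_succ, ih, Matrix.mulVec_smul]

theorem prodApply_comp (a : ℤ) (j k : ℕ) (v : Fin m → ℝ) :
    prodApply A a (j + k) v = prodApply A (a + j) k (prodApply A a j v) := by
  induction k with
  | zero => rfl
  | succ k ih =>
      have h : j + (k + 1) = (j + k) + 1 := rfl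
      rw [h, prodApply_succ, prodApply_succ, ih]
      congr 2
      push_cast
      ring

theorem exists_abs_eq_norm (hm : 1 ≤ m) (x : Fin m → ℝ) : ∃ i, |x i| = ‖x‖ := by
  have : Nonempty (Fin m) := ⟨⟨0, hm⟩⟩
  obtain ⟨i, -, hi⟩ := Finset.exists_mem_eq_sup (Finset.univ : Finset (Fin m))
    Finset.univ_nonempty (fun i => ‖x i‖₊)
  refine ⟨i, ?_⟩
  rw [Pi.norm_def, hi]
  simp [Real.norm_eq_abs]

theorem mulVec_apply (B : Matrix (Fin m) (Fin m) ℝ) (w : Fin m → ℝ) (i : Fin m) :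
    B.mulVec w i = ∑ j, B i j * w j := by
  simp [Matrix.mulVec, dotProduct]

end aux
section cone

variable {m : ℕ} (hm : 1 ≤ m) {εbar : ℝ} (hε : 0 < εbar)
variable {B : Matrix (Fin m) (Fin m) ℝ}
variable (hBpos : ∀ i j, εbar ≤ B i j)
variable (hBnorm : ∀ i, ∑ j, |B i j| ≤ ((m : ℝ) * εbar)⁻¹)

include hε hBpos in
theorem entry_nonneg : ∀ i j, (0:ℝ) ≤ B i j := fun i j => le_trans hε.le (hBpos i j)

include hε hBpos hBnorm in
theorem row_sum_le : ∀ i, ∑ j, B i j ≤ ((m : ℝ) * εbar)⁻¹ := by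
  intro i
  refine le_trans (le_of_eq ?_) (hBnorm i)
  exact Finset.sum_congr rfl fun j _ => (abs_of_nonneg (entry_nonneg hε hBpos i j)).symm

include hε hBpos hBnorm in
theorem entry_le : ∀ i j, B i j ≤ ((m : ℝ) * εbar)⁻¹ := by
  intro i j
  refine le_trans ?_ (row_sum_le hε hBpos hBnorm i)
  exact Finset.single_le_sum (fun k _ => entry_nonneg hε hBpos i k) (Finset.mem_univ j)

include hε hBpos in
theorem mulVec_lower (w : Fin m → ℝ) (hw : ∀ i, 0 ≤ w i) (i : Fin m) :
    εbar * ∑ j, w j ≤ B.mulVec w i := by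
  rw [mulVec_apply, Finset.mul_sum]
  exact Finset.sum_le_sum fun j _ => mul_le_mul_of_nonneg_right (hBpos i j) (hw j)

include hε hBpos hBnorm in
theorem mulVec_upper (w : Fin m → ℝ) (hw : ∀ i, 0 ≤ w i) (i : Fin m) :
    B.mulVec w i ≤ ((m : ℝ) * εbar)⁻¹ * ∑ j, w j := by
  rw [mulVec_apply, Finset.mul_sum]
  exact Finset.sum_le_sum fun j _ =>
    mul_le_mul_of_nonneg_right (entry_le hε hBpos hBnorm i j) (hw j)

include hε hBpos hBnorm in
theorem mulVec_upper' (w : Fin m → ℝ) (hw : ∀ i, 0 ≤ w i) (hw1 : ∀ i, w i ≤ 1) (i : Fin m) :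
    B.mulVec w i ≤ ((m : ℝ) * εbar)⁻¹ := by
  rw [mulVec_apply]
  calc ∑ j, B i j * w j ≤ ∑ j, B i j := Finset.sum_le_sum fun j _ => by
        nlinarith [entry_nonneg hε hBpos i j, hw j, hw1 j]
    _ ≤ _ := row_sum_le hε hBpos hBnorm i

include hm hε hBpos in
theorem mulVec_pos (w : Fin m → ℝ) (hw : ∀ i, 0 ≤ w i) (hsum : 0 < ∑ j, w j) (i : Fin m) :
    0 < B.mulVec w i :=
  lt_of_lt_of_le (by positivity) (mulVec_lower hε hBpos w hw i)

include hm hε hBpos hBnorm in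
theorem mulVec_bal (w : Fin m → ℝ) (hw : ∀ i, 0 ≤ w i) (i j : Fin m) :
    (m : ℝ) * εbar ^ 2 * B.mulVec w i ≤ B.mulVec w j := by
  have hm0 : (0:ℝ) < m := by exact_mod_cast hm
  have h1 := mulVec_upper hε hBpos hBnorm w hw i
  have h2 := mulVec_lower hε hBpos w hw j
  have key : (m : ℝ) * εbar ^ 2 * (((m : ℝ) * εbar)⁻¹ * ∑ k, w k) = εbar * ∑ k, w k := by
    field_simp
  nlinarith [mul_le_mul_of_nonneg_left h1 (by positivity : (0:ℝ) ≤ (m:ℝ) * εbar ^ 2)]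

end cone
noncomputable section consts

/-- balance constant -/
def bdelta (m : ℕ) (ε : ℝ) : ℝ := (m : ℝ) * ε ^ 2

def bc (m : ℕ) (ε : ℝ) : ℝ := min (ε ^ 2 * bdelta m ε) (1/3)

def btheta (m : ℕ) (ε : ℝ) : ℝ := 1 - 2 * bc m ε

def bD (m : ℕ) (ε : ℝ) : ℝ := (bdelta m ε)⁻¹ * (bdelta m ε)⁻¹

variable {m : ℕ} {εbar : ℝ}

theorem bdelta_pos (hm : 1 ≤ m) (hε : 0 < εbar) : 0 < bdelta m εbar := by
  have : (0:ℝ) < m := by exact_mod_cast hm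
  unfold bdelta; positivity

theorem bc_pos (hm : 1 ≤ m) (hε : 0 < εbar) : 0 < bc m εbar :=
  lt_min (mul_pos (pow_pos hε 2) (bdelta_pos hm hε)) (by norm_num)

theorem bc_le (hm : 1 ≤ m) (hε : 0 < εbar) : bc m εbar ≤ 1/3 := min_le_right _ _

theorem bc_le' (hm : 1 ≤ m) (hε : 0 < εbar) : bc m εbar ≤ εbar ^ 2 * bdelta m εbar :=
  min_le_left _ _

theorem btheta_ge (hm : 1 ≤ m) (hε : 0 < εbar) : 1/3 ≤ btheta m εbar := by
  have := bc_le hm hε; unfold btheta; linarith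

theorem btheta_lt_one (hm : 1 ≤ m) (hε : 0 < εbar) : btheta m εbar < 1 := by
  have := bc_pos hm hε; unfold btheta; linarith

theorem btheta_pos (hm : 1 ≤ m) (hε : 0 < εbar) : 0 < btheta m εbar :=
  lt_of_lt_of_le (by norm_num) (btheta_ge hm hε)

theorem bD_pos (hm : 1 ≤ m) (hε : 0 < εbar) : 0 < bD m εbar := by
  have := bdelta_pos hm hε; unfold bD; positivity

end consts
section step

variable {m : ℕ} (hm : 1 ≤ m) {εbar : ℝ} (hε : 0 < εbar)
variable {B : Matrix (Fin m) (Fin m) ℝ}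
variable (hBpos : ∀ i j, εbar ≤ B i j)
variable (hBnorm : ∀ i, ∑ j, |B i j| ≤ ((m : ℝ) * εbar)⁻¹)

include hm hε hBpos hBnorm in
theorem weight_lemma (y : Fin m → ℝ) (hy : ∀ i, 0 < y i)
    (hbal : ∀ i j, bdelta m εbar * y i ≤ y j) (i j : Fin m) :
    bc m εbar * B.mulVec y i ≤ B i j * y j := by
  have hm0 : (0:ℝ) < m := by exact_mod_cast hm
  have hδ : 0 < bdelta m εbar := bdelta_pos hm hε
  have h1 : B.mulVec y i ≤ ((m : ℝ) * εbar)⁻¹ * ∑ k, y k :=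
    mulVec_upper hε hBpos hBnorm y (fun k => (hy k).le) i
  have h2 : ∑ k, y k ≤ (m : ℝ) * (y j / bdelta m εbar) := by
    calc ∑ k, y k ≤ ∑ _k : Fin m, y j / bdelta m εbar := by
          refine Finset.sum_le_sum fun k _ => ?_
          rw [le_div_iff₀ hδ]
          calc y k * bdelta m εbar = bdelta m εbar * y k := mul_comm _ _
            _ ≤ y j := hbal k j
      _ = (m : ℝ) * (y j / bdelta m εbar) := by
          rw [Finset.sum_const, Finset.card_univ, Fintype.card_fin, nsmul_eq_mul]
  have h3 : ((m : ℝ) * εbar)⁻¹ * ((m : ℝ) * (y j / bdelta m εbar))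
      = y j / (εbar * bdelta m εbar) := by
    field_simp
  have h4 : B.mulVec y i ≤ y j / (εbar * bdelta m εbar) := by
    rw [← h3]
    refine le_trans h1 (mul_le_mul_of_nonneg_left h2 ?_)
    positivity
  have h6 : εbar ^ 2 * bdelta m εbar * (y j / (εbar * bdelta m εbar)) = εbar * y j := by
    field_simp
  have hq : 0 ≤ y j / (εbar * bdelta m εbar) := by
    have := bdelta_pos hm hε
    exact div_nonneg (hy j).le (by nlinarith)
  calc bc m εbar * B.mulVec y i
      ≤ bc m εbar * (y j / (εbar * bdelta m εbar)) :=
        mul_le_mul_of_nonneg_left h4 (bc_pos hm hε).le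
    _ ≤ εbar ^ 2 * bdelta m εbar * (y j / (εbar * bdelta m εbar)) :=
        mul_le_mul_of_nonneg_right (bc_le' hm hε) hq
    _ = εbar * y j := h6
    _ ≤ B i j * y j := mul_le_mul_of_nonneg_right (hBpos i j) (hy j).le

include hm hε hBpos hBnorm in
theorem contraction_step (x y : Fin m → ℝ) (hx : ∀ i, 0 < x i) (hy : ∀ i, 0 < y i)
    (hbal : ∀ i j, bdelta m εbar * y i ≤ y j)
    (s0 r0 : ℝ) (hs0 : 0 < s0)
    (hlow : ∀ j, s0 * y j ≤ x j) (hupp : ∀ j, x j ≤ r0 * y j) :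
    ∃ s' r', s0 ≤ s' ∧ s' ≤ r' ∧ (∀ j, s' * B.mulVec y j ≤ B.mulVec x j)
      ∧ (∀ j, B.mulVec x j ≤ r' * B.mulVec y j)
      ∧ r' - s' ≤ btheta m εbar * (r0 - s0) := by
  have hne : Nonempty (Fin m) := ⟨⟨0, hm⟩⟩
  have hU : (Finset.univ : Finset (Fin m)).Nonempty := Finset.univ_nonempty
  set t : Fin m → ℝ := fun j => x j / y j with ht
  set r : ℝ := Finset.univ.sup' hU t with hr
  set s : ℝ := Finset.univ.inf' hU t with hs
  have hts : ∀ j, s ≤ t j := fun j => Finset.inf'_le _ (Finset.mem_univ j)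
  have htr : ∀ j, t j ≤ r := fun j => Finset.le_sup' _ (Finset.mem_univ j)
  have hslow : ∀ j, s * y j ≤ x j := fun j => (le_div_iff₀ (hy j)).mp (hts j)
  have hrupp : ∀ j, x j ≤ r * y j := by
    intro j
    have := (div_le_iff₀ (hy j)).mp (htr j)
    linarith [this]
  have hs0s : s0 ≤ s := by
    refine Finset.le_inf' hU _ fun j _ => ?_
    rw [le_div_iff₀ (hy j)]
    exact hlow j
  have hrr0 : r ≤ r0 := by
    refine Finset.sup'_le hU _ fun j _ => ?_
    rw [div_le_iff₀ (hy j)]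
    exact hupp j
  have hsr : s ≤ r := le_trans (hts ⟨0, hm⟩) (htr ⟨0, hm⟩)
  obtain ⟨j0, -, hj0⟩ := Finset.exists_mem_eq_inf' hU t
  obtain ⟨j1, -, hj1⟩ := Finset.exists_mem_eq_sup' hU t
  have hxj : ∀ j, x j = t j * y j := fun j => (div_mul_cancel₀ (x j) (hy j).ne').symm
  have hxj0 : x j0 = s * y j0 := by rw [hxj j0, ← hj0]
  have hxj1 : x j1 = r * y j1 := by rw [hxj j1, ← hj1]
  have hc0 : 0 < bc m εbar := bc_pos hm hε
  have hc3 : bc m εbar ≤ 1/3 := bc_le hm hε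
  have hrs : 0 ≤ r - s := by linarith
  have hspos : 0 < s := lt_of_lt_of_le hs0 hs0s
  refine ⟨s + bc m εbar * (r - s), r - bc m εbar * (r - s), by nlinarith, by nlinarith,
    ?_, ?_, ?_⟩
  · -- lower bound
    intro i
    have hBy : 0 ≤ B.mulVec y i :=
      (mulVec_pos hm hε hBpos y (fun k => (hy k).le)
        (Finset.sum_pos (fun k _ => hy k) hU) i).le
    have hw : bc m εbar * B.mulVec y i ≤ B i j1 * y j1 :=
      weight_lemma hm hε hBpos hBnorm y hy hbal i j1
    have key : s * B.mulVec y i + (r - s) * (B i j1 * y j1) ≤ B.mulVec x i := by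
      rw [mulVec_apply, mulVec_apply, Finset.mul_sum]
      have hterm : ∀ j : Fin m, s * (B i j * y j)
          + (if j = j1 then (r - s) * (B i j1 * y j1) else 0) ≤ B i j * x j := by
        intro j
        by_cases hjj : j = j1
        · subst hjj
          simp only [eq_self_iff_true, if_true]
          rw [hxj1]
          exact le_of_eq (by ring)
        · simp only [if_neg hjj, add_zero]
          calc s * (B i j * y j) = B i j * (s * y j) := by ring
            _ ≤ B i j * x j :=
                mul_le_mul_of_nonneg_left (hslow j) (entry_nonneg hε hBpos i j)
      calc ∑ j, s * (B i j * y j) + (r - s) * (B i j1 * y j1)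
          = ∑ j, (s * (B i j * y j)
              + (if j = j1 then (r - s) * (B i j1 * y j1) else 0)) := by
            rw [Finset.sum_add_distrib, Finset.sum_ite_eq']
            simp
        _ ≤ ∑ j, B i j * x j := Finset.sum_le_sum fun j _ => hterm j
    nlinarith [mul_le_mul_of_nonneg_left hw hrs]
  · -- upper bound
    intro i
    have hBy : 0 ≤ B.mulVec y i :=
      (mulVec_pos hm hε hBpos y (fun k => (hy k).le)
        (Finset.sum_pos (fun k _ => hy k) hU) i).le
    have hw : bc m εbar * B.mulVec y i ≤ B i j0 * y j0 :=
      weight_lemma hm hε hBpos hBnorm y hy hbal i j0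
    have key : B.mulVec x i + (r - s) * (B i j0 * y j0) ≤ r * B.mulVec y i := by
      rw [mulVec_apply, mulVec_apply, Finset.mul_sum]
      have hterm : ∀ j : Fin m, B i j * x j
          + (if j = j0 then (r - s) * (B i j0 * y j0) else 0) ≤ r * (B i j * y j) := by
        intro j
        by_cases hjj : j = j0
        · subst hjj
          simp only [eq_self_iff_true, if_true]
          rw [hxj0]
          exact le_of_eq (by ring)
        · simp only [if_neg hjj, add_zero]
          calc B i j * x j ≤ B i j * (r * y j) :=
                mul_le_mul_of_nonneg_left (hrupp j) (entry_nonneg hε hBpos i j)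
            _ = r * (B i j * y j) := by ring
      calc ∑ j, B i j * x j + (r - s) * (B i j0 * y j0)
          = ∑ j, (B i j * x j
              + (if j = j0 then (r - s) * (B i j0 * y j0) else 0)) := by
            rw [Finset.sum_add_distrib, Finset.sum_ite_eq']
            simp
        _ ≤ ∑ j, r * (B i j * y j) := Finset.sum_le_sum fun j _ => hterm j
    nlinarith [mul_le_mul_of_nonneg_left hw hrs]
  · -- contraction amount
    have heq : r - bc m εbar * (r - s) - (s + bc m εbar * (r - s))
        = (1 - 2 * bc m εbar) * (r - s) := by ring
    rw [heq]
    unfold btheta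
    have h1 : r - s ≤ r0 - s0 := by linarith
    nlinarith

end step
section chain

variable {m : ℕ} (hm : 1 ≤ m) {εbar : ℝ} (hε : 0 < εbar)
variable {A : ℤ → Matrix (Fin m) (Fin m) ℝ}
variable (hApos : ∀ (n : ℤ) (i j : Fin m), εbar ≤ A n i j)
variable (hAnorm : ∀ (n : ℤ) (i : Fin m), ∑ j, |A n i j| ≤ ((m : ℝ) * εbar)⁻¹)

include hm in
theorem unit_le_one (w : Fin m → ℝ) (hw1 : ‖w‖ = 1) (i : Fin m) : w i ≤ 1 := by
  have := norm_le_pi_norm w i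
  rw [hw1, Real.norm_eq_abs] at this
  exact le_trans (le_abs_self _) this

include hm in
theorem unit_sum_ge (w : Fin m → ℝ) (hw0 : ∀ i, 0 ≤ w i) (hw1 : ‖w‖ = 1) :
    1 ≤ ∑ j, w j := by
  obtain ⟨i, hi⟩ := exists_abs_eq_norm hm w
  rw [hw1, abs_of_nonneg (hw0 i)] at hi
  calc (1:ℝ) = w i := hi.symm
    _ ≤ ∑ j, w j := Finset.single_le_sum (fun j _ => hw0 j) (Finset.mem_univ i)

include hm hε hApos hAnorm in
theorem bdelta_le_one : bdelta m εbar ≤ 1 := by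
  have hm0 : (0:ℝ) < m := by exact_mod_cast hm
  have h1 : εbar ≤ A 0 ⟨0, hm⟩ ⟨0, hm⟩ := hApos 0 _ _
  have h2 : A 0 ⟨0, hm⟩ ⟨0, hm⟩ ≤ ((m : ℝ) * εbar)⁻¹ :=
    entry_le hε (hApos 0) (hAnorm 0) _ _
  have h3 : εbar ≤ ((m : ℝ) * εbar)⁻¹ := le_trans h1 h2
  have h4 : εbar * ((m : ℝ) * εbar) ≤ ((m : ℝ) * εbar)⁻¹ * ((m : ℝ) * εbar) :=
    mul_le_mul_of_nonneg_right h3 (by positivity)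
  rw [inv_mul_cancel₀ (by positivity)] at h4
  unfold bdelta
  nlinarith

include hm hε hApos hAnorm in
theorem chain_lemma (a : ℤ) (k : ℕ) (w w' : Fin m → ℝ)
    (hw0 : ∀ i, 0 ≤ w i) (hw1 : ‖w‖ = 1) (hw0' : ∀ i, 0 ≤ w' i) (hw1' : ‖w'‖ = 1) :
    ∃ s r : ℝ, 0 < s ∧
      (∀ j, s * prodApply A a (k+1) w' j ≤ prodApply A a (k+1) w j) ∧
      (∀ j, prodApply A a (k+1) w j ≤ r * prodApply A a (k+1) w' j) ∧
      r - s ≤ bD m εbar * btheta m εbar ^ k * s ∧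
      (∀ i, 0 < prodApply A a (k+1) w' i) ∧
      (∀ i j, bdelta m εbar * prodApply A a (k+1) w' i ≤ prodApply A a (k+1) w' j) := by
  have hm0 : (0:ℝ) < m := by exact_mod_cast hm
  have hδ : 0 < bdelta m εbar := bdelta_pos hm hε
  have hδ1 : bdelta m εbar ≤ 1 := bdelta_le_one hm hε hApos hAnorm
  have hδdef : bdelta m εbar = (m : ℝ) * εbar ^ 2 := rfl
  induction k with
  | zero =>
      set B := A (a + (0:ℕ) + 1) with hB
      have hx := prodApply_succ A a 0 w
      have hy := prodApply_succ A a 0 w'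
      rw [prodApply_zero] at hx hy
      have hBpos := hApos (a + (0:ℕ) + 1)
      have hBnorm := hAnorm (a + (0:ℕ) + 1)
      have hxlow : ∀ i, εbar ≤ prodApply A a 1 w i := by
        intro i
        rw [hx]
        have h1 := mulVec_lower hε hBpos w hw0 i
        have h2 := unit_sum_ge hm w hw0 hw1
        nlinarith
      have hxup : ∀ i, prodApply A a 1 w i ≤ ((m : ℝ) * εbar)⁻¹ := by
        intro i
        rw [hx]
        exact mulVec_upper' hε hBpos hBnorm w hw0 (unit_le_one hm w hw1) i
      have hylow : ∀ i, εbar ≤ prodApply A a 1 w' i := by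
        intro i
        rw [hy]
        have h1 := mulVec_lower hε hBpos w' hw0' i
        have h2 := unit_sum_ge hm w' hw0' hw1'
        nlinarith
      have hyup : ∀ i, prodApply A a 1 w' i ≤ ((m : ℝ) * εbar)⁻¹ := by
        intro i
        rw [hy]
        exact mulVec_upper' hε hBpos hBnorm w' hw0' (unit_le_one hm w' hw1') i
      have hkey : bdelta m εbar * ((m : ℝ) * εbar)⁻¹ = εbar := by
        rw [hδdef]
        field_simp
      refine ⟨bdelta m εbar, (bdelta m εbar)⁻¹, hδ, ?_, ?_, ?_, ?_, ?_⟩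
      · intro j
        calc bdelta m εbar * prodApply A a 1 w' j
            ≤ bdelta m εbar * ((m : ℝ) * εbar)⁻¹ :=
              mul_le_mul_of_nonneg_left (hyup j) hδ.le
          _ = εbar := hkey
          _ ≤ prodApply A a 1 w j := hxlow j
      · intro j
        have hkey2 : (bdelta m εbar)⁻¹ * εbar = ((m : ℝ) * εbar)⁻¹ := by
          rw [hδdef]
          field_simp
        calc prodApply A a 1 w j ≤ ((m : ℝ) * εbar)⁻¹ := hxup j
          _ = (bdelta m εbar)⁻¹ * εbar := hkey2.symm
          _ ≤ (bdelta m εbar)⁻¹ * prodApply A a 1 w' j :=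
              mul_le_mul_of_nonneg_left (hylow j) (by positivity)
      · rw [pow_zero]
        unfold bD
        have : (bdelta m εbar)⁻¹ * (bdelta m εbar)⁻¹ * 1 * bdelta m εbar
            = (bdelta m εbar)⁻¹ := by
          field_simp
        rw [this]
        nlinarith
      · exact fun i => lt_of_lt_of_le hε (hylow i)
      · intro i j
        rw [hy, hδdef]
        exact mulVec_bal hm hε hBpos hBnorm w' hw0' i j
  | succ k ih =>
      obtain ⟨s, r, hs, hl, hu, hcon, hypos, hybal⟩ := ih
      set B := A (a + (k+1 : ℕ) + 1) with hB
      have hstep := contraction_step hm hε (hApos (a + (k+1:ℕ) + 1)) (hAnorm (a + (k+1:ℕ) + 1))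
        (prodApply A a (k+1) w) (prodApply A a (k+1) w')
        (fun i => lt_of_lt_of_le (mul_pos hs (hypos i)) (hl i)) hypos hybal
        s r hs hl hu
      obtain ⟨s', r', hss', hsr', hl', hu', hd⟩ := hstep
      have hx2 := prodApply_succ A a (k+1) w
      have hy2 := prodApply_succ A a (k+1) w'
      have hθ0 : 0 < btheta m εbar := btheta_pos hm hε
      have hD0 : 0 < bD m εbar := bD_pos hm hε
      refine ⟨s', r', lt_of_lt_of_le hs hss', ?_, ?_, ?_, ?_, ?_⟩
      · intro j
        rw [hx2, hy2]
        exact hl' j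
      · intro j
        rw [hx2, hy2]
        exact hu' j
      · have h1 : r' - s' ≤ btheta m εbar * (r - s) := hd
        have h2 : btheta m εbar * (r - s) ≤ btheta m εbar * (bD m εbar * btheta m εbar ^ k * s) :=
          mul_le_mul_of_nonneg_left hcon hθ0.le
        have h3 : btheta m εbar * (bD m εbar * btheta m εbar ^ k * s)
            = bD m εbar * btheta m εbar ^ (k+1) * s := by ring
        have h4 : bD m εbar * btheta m εbar ^ (k+1) * s
            ≤ bD m εbar * btheta m εbar ^ (k+1) * s' := by
          have : 0 ≤ bD m εbar * btheta m εbar ^ (k+1) := by positivity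
          nlinarith
        linarith
      · intro i
        rw [hy2]
        have hne : Nonempty (Fin m) := ⟨⟨0, hm⟩⟩
        exact mulVec_pos hm hε (hApos _) _ (fun i => (hypos i).le)
          (Finset.sum_pos (fun i _ => hypos i) Finset.univ_nonempty) i
      · intro i j
        rw [hy2, hδdef]
        exact mulVec_bal hm hε (hApos _) (hAnorm _) _ (fun i => (hypos i).le) i j

end chain
section convert

variable {m : ℕ} (hm : 1 ≤ m)

include hm in
theorem norm_pos_of_pos (x : Fin m → ℝ) (hx : ∀ i, 0 < x i) : 0 < ‖x‖ := by
  have h1 := norm_le_pi_norm x ⟨0, hm⟩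
  rw [Real.norm_eq_abs] at h1
  exact lt_of_lt_of_le (lt_of_lt_of_le (hx ⟨0, hm⟩) (le_abs_self _)) h1

include hm in
theorem norm_normalize_sub_le (x y : Fin m → ℝ) (hx : ∀ i, 0 < x i) (hy : ∀ i, 0 < y i)
    (s r q : ℝ) (hs : 0 < s) (hq : 0 ≤ q)
    (hl : ∀ j, s * y j ≤ x j) (hu : ∀ j, x j ≤ r * y j) (hrs : r - s ≤ q * s) :
    ‖‖x‖⁻¹ • x - ‖y‖⁻¹ • y‖ ≤ q := by
  have hnx : 0 < ‖x‖ := norm_pos_of_pos hm x hx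
  have hny : 0 < ‖y‖ := norm_pos_of_pos hm y hy
  set nx := ‖x‖
  set ny := ‖y‖
  have hxle : ∀ i, x i ≤ nx := fun i => by
    have := norm_le_pi_norm x i
    rw [Real.norm_eq_abs] at this
    exact le_trans (le_abs_self _) this
  have hyle : ∀ i, y i ≤ ny := fun i => by
    have := norm_le_pi_norm y i
    rw [Real.norm_eq_abs] at this
    exact le_trans (le_abs_self _) this
  obtain ⟨j1, hj1⟩ := exists_abs_eq_norm hm y
  rw [abs_of_pos (hy j1)] at hj1
  obtain ⟨j2, hj2⟩ := exists_abs_eq_norm hm x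
  rw [abs_of_pos (hx j2)] at hj2
  have hsr : s ≤ r := by nlinarith [hl j2, hu j2, hy j2]
  have hr0 : 0 < r := lt_of_lt_of_le hs hsr
  have F1 : s * ny ≤ nx := by
    have := hl j1
    rw [hj1] at this
    exact le_trans this (hxle j1)
  have F2 : nx ≤ r * ny := by
    have := hu j2
    rw [hj2] at this
    exact le_trans this (mul_le_mul_of_nonneg_left (hyle j2) hr0.le)
  have E1 : r * ny - nx ≤ q * nx := by
    nlinarith [mul_le_mul_of_nonneg_right hrs hny.le, mul_le_mul_of_nonneg_left F1 hq]
  have E2 : nx - s * ny ≤ q * nx := by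
    nlinarith [mul_le_mul_of_nonneg_right hrs hny.le, mul_le_mul_of_nonneg_left F1 hq]
  rw [pi_norm_le_iff_of_nonneg hq]
  intro i
  have hdiff : (‖x‖⁻¹ • x - ‖y‖⁻¹ • y) i = (ny * x i - nx * y i) / (nx * ny) := by
    simp only [Pi.sub_apply, Pi.smul_apply, smul_eq_mul]
    field_simp
    have e1 : ‖x‖⁻¹ * nx = 1 := inv_mul_cancel₀ hnx.ne'
    have e2 : ‖y‖⁻¹ * ny = 1 := inv_mul_cancel₀ hny.ne'
    linear_combination (x i * ny) * e1 - (y i * nx) * e2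
  rw [Real.norm_eq_abs, hdiff, abs_div, abs_of_pos (by positivity : (0:ℝ) < nx * ny),
    div_le_iff₀ (by positivity : (0:ℝ) < nx * ny)]
  rw [abs_le]
  constructor
  · -- -(q * (nx*ny)) ≤ ny * x i - nx * y i
    have G2 : nx * y i - ny * x i ≤ q * (nx * ny) := by
      nlinarith [mul_le_mul_of_nonneg_left (hl i) hny.le,
        mul_le_mul_of_nonneg_right E2 (hy i).le,
        mul_le_mul_of_nonneg_left (hyle i) (mul_nonneg hq hnx.le)]
    linarith
  · -- ny * x i - nx * y i ≤ q * (nx*ny)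
    have G1 : ny * x i - nx * y i ≤ q * (nx * ny) := by
      nlinarith [mul_le_mul_of_nonneg_left (hu i) hny.le,
        mul_le_mul_of_nonneg_right E1 (hy i).le,
        mul_le_mul_of_nonneg_left (hyle i) (mul_nonneg hq hnx.le)]
    exact G1

end convert
theorem normalize_smul_pos {m : ℕ} (t : ℝ) (ht : 0 < t) (z : Fin m → ℝ) :
    ‖t • z‖⁻¹ • (t • z) = ‖z‖⁻¹ • z := by
  rw [norm_smul, Real.norm_eq_abs, abs_of_pos ht, smul_smul, mul_inv]
  congr 1
  rw [mul_comm t⁻¹ ‖z‖⁻¹, mul_assoc, inv_mul_cancel₀ ht.ne', mul_one]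

section assemble

variable {m : ℕ} (hm : 1 ≤ m) {εbar : ℝ} (hε : 0 < εbar)
variable {A : ℤ → Matrix (Fin m) (Fin m) ℝ}
variable (hApos : ∀ (n : ℤ) (i j : Fin m), εbar ≤ A n i j)
variable (hAnorm : ∀ (n : ℤ) (i : Fin m), ∑ j, |A n i j| ≤ ((m : ℝ) * εbar)⁻¹)

include hm hε hApos hAnorm in
theorem chain_pos (a : ℤ) (k : ℕ) (w : Fin m → ℝ) (hw0 : ∀ i, 0 ≤ w i) (hw1 : ‖w‖ = 1) :
    ∀ i, 0 < prodApply A a (k+1) w i := by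
  obtain ⟨s, r, hs, hl, hu, hcon, hypos, hybal⟩ :=
    chain_lemma hm hε hApos hAnorm a k w w hw0 hw1 hw0 hw1
  exact hypos

include hm hε hApos hAnorm in
theorem dist2 (a : ℤ) (k : ℕ) (w w' : Fin m → ℝ)
    (hw0 : ∀ i, 0 ≤ w i) (hw1 : ‖w‖ = 1) (hw0' : ∀ i, 0 ≤ w' i) (hw1' : ‖w'‖ = 1) :
    ‖‖prodApply A a (k+1) w‖⁻¹ • prodApply A a (k+1) w
      - ‖prodApply A a (k+1) w'‖⁻¹ • prodApply A a (k+1) w'‖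
      ≤ bD m εbar * btheta m εbar ^ k := by
  obtain ⟨s, r, hs, hl, hu, hcon, hypos, hybal⟩ :=
    chain_lemma hm hε hApos hAnorm a k w w' hw0 hw1 hw0' hw1'
  refine norm_normalize_sub_le hm _ _
    (fun i => lt_of_lt_of_le (mul_pos hs (hypos i)) (hl i)) hypos s r _ hs ?_ hl hu ?_
  · exact mul_nonneg (bD_pos hm hε).le (pow_nonneg (btheta_pos hm hε).le k)
  · exact hcon

include hm hε hApos hAnorm in
theorem NN_props (a n : ℤ) (han : a < n) (w : Fin m → ℝ)
    (hw0 : ∀ i, 0 ≤ w i) (hw1 : ‖w‖ = 1) :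
    (∀ i, 0 ≤ (‖prodApply A a (n - a).toNat w‖⁻¹ • prodApply A a (n - a).toNat w) i)
    ∧ ‖‖prodApply A a (n - a).toNat w‖⁻¹ • prodApply A a (n - a).toNat w‖ = 1 := by
  have hK : (n - a).toNat = ((n - a).toNat - 1) + 1 := by omega
  have hzpos : ∀ i, 0 < prodApply A a (n - a).toNat w i := by
    rw [hK]
    exact chain_pos hm hε hApos hAnorm a _ w hw0 hw1
  have hnz : 0 < ‖prodApply A a (n - a).toNat w‖ :=
    norm_pos_of_pos hm _ hzpos
  constructor
  · intro i
    simp only [Pi.smul_apply, smul_eq_mul]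
    exact mul_nonneg (inv_nonneg.mpr hnz.le) (hzpos i).le
  · rw [norm_smul, Real.norm_eq_abs, abs_of_pos (inv_pos.mpr hnz), inv_mul_cancel₀ hnz.ne']

include hm hε hApos hAnorm in
theorem dist_NN (a n : ℤ) (han : a < n) (w w' : Fin m → ℝ)
    (hw0 : ∀ i, 0 ≤ w i) (hw1 : ‖w‖ = 1) (hw0' : ∀ i, 0 ≤ w' i) (hw1' : ‖w'‖ = 1) :
    ‖‖prodApply A a (n - a).toNat w‖⁻¹ • prodApply A a (n - a).toNat w
      - ‖prodApply A a (n - a).toNat w'‖⁻¹ • prodApply A a (n - a).toNat w'‖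
      ≤ bD m εbar * btheta m εbar ^ ((n - a).toNat - 1) := by
  have hK : (n - a).toNat = ((n - a).toNat - 1) + 1 := by omega
  rw [hK]
  exact dist2 hm hε hApos hAnorm a _ w w' hw0 hw1 hw0' hw1'

include hm hε hApos hAnorm in
theorem shift_NN (a' a n : ℤ) (ha : a' < a) (han : a < n) (w : Fin m → ℝ)
    (hw0 : ∀ i, 0 ≤ w i) (hw1 : ‖w‖ = 1) :
    ‖prodApply A a' (n - a').toNat w‖⁻¹ • prodApply A a' (n - a').toNat w
    = ‖prodApply A a (n - a).toNat
        (‖prodApply A a' (a - a').toNat w‖⁻¹ • prodApply A a' (a - a').toNat w)‖⁻¹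
      • prodApply A a (n - a).toNat
        (‖prodApply A a' (a - a').toNat w‖⁻¹ • prodApply A a' (a - a').toNat w) := by
  set j : ℕ := (a - a').toNat with hj
  set K : ℕ := (n - a).toNat with hKdef
  have hsplit : (n - a').toNat = j + K := by omega
  have haj : a' + (j : ℤ) = a := by omega
  set y : Fin m → ℝ := prodApply A a' j w with hy
  have hypos : ∀ i, 0 < y i := by
    have hj1 : j = (j - 1) + 1 := by omega
    rw [hy, hj1]
    exact chain_pos hm hε hApos hAnorm a' _ w hw0 hw1
  have hny : 0 < ‖y‖ := norm_pos_of_pos hm _ hypos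
  have hcomp : prodApply A a' (n - a').toNat w = prodApply A a K y := by
    rw [hsplit, prodApply_comp, haj]
  have hsm : prodApply A a K (‖y‖⁻¹ • y) = ‖y‖⁻¹ • prodApply A a K y :=
    prodApply_smul A a K _ y
  rw [hcomp, hsm]
  exact (normalize_smul_pos _ (inv_pos.mpr hny) _).symm

include hm hε hApos hAnorm in
theorem main_exists (n : ℤ) :
    ∃ l : Fin m → ℝ, (∀ i, 0 ≤ l i) ∧ ‖l‖ = 1 ∧
      ∀ a, a < n → ∀ w : Fin m → ℝ, (∀ i, 0 ≤ w i) → ‖w‖ = 1 →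
        ‖l - ‖prodApply A a (n - a).toNat w‖⁻¹ • prodApply A a (n - a).toNat w‖
          ≤ bD m εbar * btheta m εbar ^ ((n - a).toNat - 1) := by
  have hne : Nonempty (Fin m) := ⟨⟨0, hm⟩⟩
  set u : Fin m → ℝ := fun _ => 1 with hu
  have hu0 : ∀ i, 0 ≤ u i := fun i => by norm_num [hu]
  have hu1 : ‖u‖ = 1 := by rw [hu, pi_norm_const]; norm_num
  set f : ℕ → (Fin m → ℝ) := fun b =>
    ‖prodApply A (n - 1 - b) (n - (n - 1 - b)).toNat u‖⁻¹
      • prodApply A (n - 1 - b) (n - (n - 1 - b)).toNat u with hf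
  have hfb : ∀ (b : ℕ) (a : ℤ), a < n → (n - 1 - (b:ℤ)) ≤ a →
      ∀ w : Fin m → ℝ, (∀ i, 0 ≤ w i) → ‖w‖ = 1 →
      ‖f b - ‖prodApply A a (n - a).toNat w‖⁻¹ • prodApply A a (n - a).toNat w‖
        ≤ bD m εbar * btheta m εbar ^ ((n - a).toNat - 1) := by
    intro b a han hba w hw0 hw1
    rcases eq_or_lt_of_le hba with hEq | hLt
    · have : f b = ‖prodApply A a (n - a).toNat u‖⁻¹ • prodApply A a (n - a).toNat u := by
        rw [hf]
        simp only [hEq]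
      rw [this]
      exact dist_NN hm hε hApos hAnorm a n han u w hu0 hu1 hw0 hw1
    · set a' : ℤ := n - 1 - b with ha'
      have hshift := shift_NN hm hε hApos hAnorm a' a n hLt han u hu0 hu1
      have hv := NN_props hm hε hApos hAnorm a' a hLt u hu0 hu1
      have : f b = ‖prodApply A a (n - a).toNat
          (‖prodApply A a' (a - a').toNat u‖⁻¹ • prodApply A a' (a - a').toNat u)‖⁻¹
        • prodApply A a (n - a).toNat
          (‖prodApply A a' (a - a').toNat u‖⁻¹ • prodApply A a' (a - a').toNat u) := by
        rw [hf]
        exact hshift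
      rw [this]
      exact dist_NN hm hε hApos hAnorm a n han _ w hv.1 hv.2 hw0 hw1
  have hcauchy : CauchySeq f := by
    apply cauchySeq_of_le_geometric (btheta m εbar) (bD m εbar) (btheta_lt_one hm hε)
    intro b
    rw [dist_eq_norm, norm_sub_rev]
    have key := hfb (b+1) (n - 1 - (b:ℤ)) (by omega) (by push_cast; omega) u hu0 hu1
    have hKb : (n - (n - 1 - (b:ℤ))).toNat - 1 = b := by omega
    rw [hKb] at key
    have hfbdef : (‖prodApply A (n - 1 - (b:ℤ)) (n - (n - 1 - (b:ℤ))).toNat u‖⁻¹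
        • prodApply A (n - 1 - (b:ℤ)) (n - (n - 1 - (b:ℤ))).toNat u) = f b := rfl
    rw [hfbdef] at key
    exact key
  obtain ⟨l, hl⟩ := cauchySeq_tendsto_of_complete hcauchy
  refine ⟨l, ?_, ?_, ?_⟩
  · intro i
    refine ge_of_tendsto' ((tendsto_pi_nhds.mp hl) i) fun b => ?_
    have := NN_props hm hε hApos hAnorm (n - 1 - b) n (by omega) u hu0 hu1
    exact this.1 i
  · have h1 : Tendsto (fun b => ‖f b‖) atTop (nhds ‖l‖) := hl.norm
    have h2 : ∀ b, ‖f b‖ = 1 := fun b =>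
      (NN_props hm hε hApos hAnorm (n - 1 - b) n (by omega) u hu0 hu1).2
    have h3 : Tendsto (fun _ : ℕ => (1:ℝ)) atTop (nhds ‖l‖) := by
      refine Tendsto.congr (fun b => (h2 b)) h1
    exact tendsto_nhds_unique h3 tendsto_const_nhds
  · intro a han w hw0 hw1
    have htend : Tendsto
        (fun b => ‖f b - ‖prodApply A a (n - a).toNat w‖⁻¹ • prodApply A a (n - a).toNat w‖)
        atTop (nhds ‖l - ‖prodApply A a (n - a).toNat w‖⁻¹ • prodApply A a (n - a).toNat w‖) :=
      (hl.sub tendsto_const_nhds).norm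
    refine le_of_tendsto htend ?_
    rw [eventually_atTop]
    refine ⟨(n - 1 - a).toNat, fun b hb => ?_⟩
    exact hfb b a han (by omega) w hw0 hw1

end assemble
/-- Contraction property of products of strictly positive matrices
(equations (2.17)–(2.18) and Appendix B). Here `‖x‖` is the sup norm `max_i |x_i|`
(the norm of `Fin m → ℝ`), and the condition `∀ i, ∑ j, |A n i j| ≤ (m ε̄)⁻¹`
expresses `‖A_n‖ ≤ (m ε̄)⁻¹`. -/
theorem positive_matrix_contraction (m : ℕ) (hm : 1 ≤ m) (εbar : ℝ) (hε : 0 < εbar)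
    (A : ℤ → Matrix (Fin m) (Fin m) ℝ)
    (hpos : ∀ (n : ℤ) (i j : Fin m), εbar ≤ A n i j)
    (hnorm : ∀ (n : ℤ) (i : Fin m), ∑ j, |A n i j| ≤ ((m : ℝ) * εbar)⁻¹) :
    ∃ (v : ℤ → Fin m → ℝ) (C θ : ℝ), 0 < C ∧ 0 < θ ∧ θ < 1 ∧
      (∀ n : ℤ, (∀ i, 0 ≤ v n i) ∧ ‖v n‖ = 1) ∧
      (∀ a n : ℤ, a < n → ∀ w : Fin m → ℝ, (∀ i, 0 ≤ w i) → ‖w‖ = 1 →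
        ‖v n - ‖prodApply A a (n - a).toNat w‖⁻¹ • prodApply A a (n - a).toNat w‖
          ≤ C * θ ^ (n - a)) ∧
      (∀ n : ℤ, ∀ w : ℤ → Fin m → ℝ, (∀ a : ℤ, (∀ i, 0 ≤ w a i) ∧ ‖w a‖ = 1) →
        Tendsto
          (fun a : ℤ =>
            ‖prodApply A a (n - a).toNat (w a)‖⁻¹ • prodApply A a (n - a).toNat (w a))
          atBot (nhds (v n))) := by
  have hθ0 := btheta_pos hm hε
  have hθ1 := btheta_lt_one hm hε
  have hD0 := bD_pos hm hε
  choose v hv using fun n => main_exists hm hε hpos hnorm n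
  have hbound : ∀ a n : ℤ, a < n → ∀ w : Fin m → ℝ, (∀ i, 0 ≤ w i) → ‖w‖ = 1 →
      ‖v n - ‖prodApply A a (n - a).toNat w‖⁻¹ • prodApply A a (n - a).toNat w‖
        ≤ bD m εbar / btheta m εbar * btheta m εbar ^ (n - a) := by
    intro a n han w hw0 hw1
    have h := (hv n).2.2 a han w hw0 hw1
    have hz : btheta m εbar ^ (n - a) = btheta m εbar ^ ((n - a).toNat) := by
      rw [← zpow_natCast]
      congr 1
      omega
    have h1 : (n - a).toNat = ((n - a).toNat - 1) + 1 := by omega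
    have heq : bD m εbar * btheta m εbar ^ ((n - a).toNat - 1)
        = bD m εbar / btheta m εbar * btheta m εbar ^ (n - a) := by
      rw [hz, h1, pow_succ]
      field_simp
      ring
      rw [Nat.add_sub_cancel_left]
    rw [heq] at h
    exact h
  refine ⟨v, bD m εbar / btheta m εbar, btheta m εbar, div_pos hD0 hθ0, hθ0, hθ1, ?_, ?_, ?_⟩
  · exact fun n => ⟨(hv n).1, (hv n).2.1⟩
  · exact hbound
  · intro n w hw
    rw [tendsto_iff_norm_sub_tendsto_zero]
    refine squeeze_zero'
      (g := fun a : ℤ => bD m εbar * btheta m εbar ^ ((n - a).toNat - 1))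
      (Eventually.of_forall fun a => norm_nonneg _) ?_ ?_
    · filter_upwards [eventually_le_atBot (n - 1)] with a ha
      have han : a < n := by omega
      have h := (hv n).2.2 a han (w a) (hw a).1 (hw a).2
      rw [norm_sub_rev]
      exact h
    · have h1 : Tendsto (fun a : ℤ => (n - a).toNat - 1) atBot atTop := by
        apply tendsto_atTop.mpr
        intro b
        filter_upwards [eventually_le_atBot (n - b - 1)] with a ha
        omega
      have h2 := (tendsto_pow_atTop_nhds_zero_of_lt_one hθ0.le hθ1).comp h1
      have h3 := h2.const_mul (bD m εbar)
      rw [mul_zero] at h3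
      exact h3.congr fun a => rfl
end

section
/- Fix an integer m ≥ 1, ε̄ > 0 and C̃_P > 0. Let (A_n)_{n∈ℤ} be m×m matrices with A_n(i,j) ≥ ε̄ for all i,j, ‖A_n‖ ≤ (m ε̄)^{−1} for all n, and such that for all integers n > k and every nonzero nonnegative x ∈ ℝ^m, e^{−C̃_P}‖x‖·𝟏 ≤ A_n ⋯ A_{k+1} x ≤ e^{C̃_P}‖x‖·𝟏 coordinatewise. Then there exists a sequence of vectors (u_n)_{n∈ℤ} in ℝ^m such that u_n = A_n u_{n−1} for all n ∈ ℤ, every entry of every u_n is strictly positive, and sup_{n∈ℤ} ‖u_n‖ < ∞. -/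
open Filter Topology

/-- existence of a bounded, strictly positive solution of `u_n = A_n u_{n−1}`
(Lemma 4.2(i)). Here `‖x‖` is the sup norm `max_i |x_i|` on `Fin m → ℝ`. -/
theorem exists_bounded_positive_solution (m : ℕ) (hm : 1 ≤ m) (εbar Ctil : ℝ)
    (hε : 0 < εbar) (hCtil : 0 < Ctil)
    (A : ℤ → Matrix (Fin m) (Fin m) ℝ)
    (hpos : ∀ (n : ℤ) (i j : Fin m), εbar ≤ A n i j)
    (hnorm : ∀ (n : ℤ) (i : Fin m), ∑ j, |A n i j| ≤ ((m : ℝ) * εbar)⁻¹)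
    (hBP : ∀ (n k : ℤ), k < n → ∀ x : Fin m → ℝ, (∀ i, 0 ≤ x i) → x ≠ 0 →
      ∀ i : Fin m,
        Real.exp (-Ctil) * ‖x‖ ≤ prodApply A k (n - k).toNat x i ∧
        prodApply A k (n - k).toNat x i ≤ Real.exp Ctil * ‖x‖) :
    ∃ u : ℤ → Fin m → ℝ,
      (∀ n : ℤ, u n = (A n).mulVec (u (n - 1))) ∧
      (∀ (n : ℤ) (i : Fin m), 0 < u n i) ∧
      (∃ M : ℝ, ∀ n : ℤ, ‖u n‖ ≤ M) := by
  have i0 : Fin m := ⟨0, by omega⟩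
  haveI : Nonempty (Fin m) := ⟨i0⟩
  set one : Fin m → ℝ := fun _ => 1 with hone
  have hone_norm : ‖one‖ = 1 := by
    simpa [hone] using (Pi.norm_const (α := Fin m) (1 : ℝ))
  have hone_ne : one ≠ 0 := by
    intro h
    have := congrFun h i0
    simp [hone] at this
  set U : Ultrafilter ℕ := Ultrafilter.of atTop with hU
  have hUle : (U : Filter ℕ) ≤ atTop := Ultrafilter.of_le _
  set w : ℕ → ℤ → Fin m → ℝ := fun k n => prodApply A (-(k : ℤ)) (n + k).toNat one with hw
  -- bounds
  have hbnd : ∀ (n : ℤ) (i : Fin m) (k : ℕ), -(k : ℤ) < n →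
      w k n i ∈ Set.Icc (Real.exp (-Ctil)) (Real.exp Ctil) := by
    intro n i k hk
    have h := hBP n (-(k : ℤ)) hk one (fun _ => zero_le_one) hone_ne i
    have hnk : (n - -(k : ℤ)) = n + k := by ring
    rw [hnk] at h
    simp only [hw, hone_norm, mul_one] at h ⊢
    exact h
  -- recurrence for w
  have hrec : ∀ (n : ℤ) (k : ℕ), 1 ≤ n + (k : ℤ) →
      w k n = (A n).mulVec (w k (n - 1)) := by
    intro n k hk
    have hj : (n + k).toNat = (n - 1 + k).toNat + 1 := by omega
    have hjz : ((n - 1 + k).toNat : ℤ) = n - 1 + k := by omega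
    have : w k n = (A (-(k : ℤ) + ((n - 1 + k).toNat : ℤ) + 1)).mulVec
        (prodApply A (-(k : ℤ)) (n - 1 + k).toNat one) := by
      rw [hw]; simp only [hj]; rfl
    rw [this, hjz]
    have harg : -(k : ℤ) + (n - 1 + k) + 1 = n := by ring
    rw [harg]
  -- limit existence
  have hlim : ∀ (n : ℤ) (i : Fin m), ∃ L ∈ Set.Icc (Real.exp (-Ctil)) (Real.exp Ctil),
      Tendsto (fun k => w k n i) U (𝓝 L) := by
    intro n i
    have hev : ∀ᶠ k in (U : Filter ℕ), w k n i ∈ Set.Icc (Real.exp (-Ctil)) (Real.exp Ctil) := by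
      apply hUle
      filter_upwards [eventually_gt_atTop (-n).toNat] with k hk
      exact hbnd n i k (by omega)
    have hle : (Ultrafilter.map (fun k => w k n i) U : Filter ℝ) ≤ 𝓟 (Set.Icc (Real.exp (-Ctil)) (Real.exp Ctil)) := by
      rw [Ultrafilter.coe_map, le_principal_iff]
      exact hev
    obtain ⟨L, hL, hL2⟩ := isCompact_Icc.ultrafilter_le_nhds (U.map _) hle
    exact ⟨L, hL, by rwa [Tendsto, ← Ultrafilter.coe_map]⟩
  choose L hLmem hLtd using hlim
  refine ⟨fun n => L n, ?_, ?_, ?_⟩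
  · intro n
    funext i
    have h1 : Tendsto (fun k => w k n i) U (𝓝 (L n i)) := hLtd n i
    have h2 : Tendsto (fun k => ∑ j, A n i j * w k (n - 1) j) U
        (𝓝 (∑ j, A n i j * L (n - 1) j)) := by
      exact tendsto_finset_sum _ fun j _ => (hLtd (n - 1) j).const_mul _
    have heq : ∀ᶠ k in (U : Filter ℕ), w k n i = ∑ j, A n i j * w k (n - 1) j := by
      apply hUle
      filter_upwards [eventually_gt_atTop (1 - n).toNat] with k hk
      have := hrec n k (by omega)
      have := congrFun this i
      simpa [Matrix.mulVec, dotProduct] using this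
    have := tendsto_nhds_unique (h1.congr' heq) h2
    simpa [Matrix.mulVec, dotProduct] using this
  · intro n i
    exact lt_of_lt_of_le (Real.exp_pos _) (hLmem n i).1
  · refine ⟨Real.exp Ctil, fun n => ?_⟩
    rw [pi_norm_le_iff_of_nonneg (Real.exp_pos Ctil).le]
    intro i
    rw [Real.norm_eq_abs, abs_le]
    exact ⟨le_trans (le_trans (neg_nonpos.mpr (Real.exp_pos Ctil).le) (Real.exp_pos (-Ctil)).le) (hLmem n i).1, (hLmem n i).2⟩
end

section
/- Fix an integer m ≥ 1, ε̄ > 0 and C̃_P > 0. Let (A_n)_{n∈ℤ} be m×m matrices with A_n(i,j) ≥ ε̄ for all i,j, ‖A_n‖ ≤ (m ε̄)^{−1} for all n, and such that for all integers n > k and every nonzero nonnegative x ∈ ℝ^m, e^{−C̃_P}‖x‖·𝟏 ≤ A_n ⋯ A_{k+1} x ≤ e^{C̃_P}‖x‖·𝟏 coordinatewise. Let (u_n)_{n∈ℤ} be a bounded sequence of strictly positive vectors with u_n = A_n u_{n−1} for all n. If (ũ_n)_{n∈ℤ} is any sequence of vectors in ℝ^m satisfying ũ_n = A_n ũ_{n−1}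 for all n ∈ ℤ and (1/|n|) log‖ũ_n‖ → 0 as n → −∞, then (ũ_n) is bounded and there exists c ∈ ℝ such that ũ_n = c·u_n for all n ∈ ℤ. -/
open Filter

/-- uniqueness (up to constant multiples) of subexponentially growing
solutions of `ũ_n = A_n ũ_{n−1}` (Lemma 4.2(ii)). Here `‖x‖` is the sup norm
`max_i |x_i|` on `Fin m → ℝ`. -/
theorem solution_unique_up_to_constant (m : ℕ) (hm : 1 ≤ m) (εbar Ctil : ℝ)
    (hε : 0 < εbar) (hCtil : 0 < Ctil)
    (A : ℤ → Matrix (Fin m) (Fin m) ℝ)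
    (hpos : ∀ (n : ℤ) (i j : Fin m), εbar ≤ A n i j)
    (hnorm : ∀ (n : ℤ) (i : Fin m), ∑ j, |A n i j| ≤ ((m : ℝ) * εbar)⁻¹)
    (hBP : ∀ (n k : ℤ), k < n → ∀ x : Fin m → ℝ, (∀ i, 0 ≤ x i) → x ≠ 0 →
      ∀ i : Fin m,
        Real.exp (-Ctil) * ‖x‖ ≤ prodApply A k (n - k).toNat x i ∧
        prodApply A k (n - k).toNat x i ≤ Real.exp Ctil * ‖x‖)
    (u : ℤ → Fin m → ℝ)
    (hu_rec : ∀ n : ℤ, u n = (A n).mulVec (u (n - 1)))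
    (hu_pos : ∀ (n : ℤ) (i : Fin m), 0 < u n i)
    (hu_bdd : ∃ M : ℝ, ∀ n : ℤ, ‖u n‖ ≤ M)
    (v : ℤ → Fin m → ℝ)
    (hv_rec : ∀ n : ℤ, v n = (A n).mulVec (v (n - 1)))
    (hv_subexp :
      Tendsto (fun n : ℤ => (|(n : ℝ)|)⁻¹ * Real.log ‖v n‖) atBot (nhds 0)) :
    (∃ M : ℝ, ∀ n : ℤ, ‖v n‖ ≤ M) ∧ ∃ c : ℝ, ∀ n : ℤ, v n = c • u n := by
  classical
  obtain ⟨M, hM⟩ := hu_bdd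
  haveI hmne : Nonempty (Fin m) := ⟨⟨0, hm⟩⟩
  have hne : (Finset.univ : Finset (Fin m)).Nonempty := Finset.univ_nonempty
  set i0 : Fin m := ⟨0, hm⟩ with hi0
  have hu_nonneg : ∀ (n : ℤ) (i : Fin m), (0:ℝ) ≤ u n i := fun n i => (hu_pos n i).le
  have hu_ne : ∀ n : ℤ, u n ≠ 0 := fun n h => (hu_pos n i0).ne' (by rw [h]; rfl)
  have habs : ∀ (x : Fin m → ℝ) (i : Fin m), |x i| ≤ ‖x‖ := fun x i => by
    simpa [Real.norm_eq_abs] using norm_le_pi_norm x i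
  have hnormle : ∀ (x : Fin m → ℝ) (t : ℝ), 0 ≤ t → (∀ i, |x i| ≤ t) → ‖x‖ ≤ t := by
    intro x t ht h
    refine (pi_norm_le_iff_of_nonneg ht).2 fun i => ?_
    simpa [Real.norm_eq_abs] using h i
  have hu0pos : 0 < ‖u 0‖ := lt_of_lt_of_le (hu_pos 0 i0) ((le_abs_self _).trans (habs _ i0))
  have hMpos : 0 < M := lt_of_lt_of_le hu0pos (hM 0)
  -- products applied to u
  have hprod_u : ∀ (k : ℤ) (j : ℕ), prodApply A k j (u k) = u (k + j) := by
    intro k j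
    induction j with
    | zero => simp [prodApply]
    | succ j ih =>
      have h := hu_rec (k + j + 1)
      have e : (k + (j:ℤ) + 1) - 1 = k + (j:ℤ) := by ring
      rw [e] at h
      show (A (k + (j:ℤ) + 1)).mulVec (prodApply A k j (u k)) = u (k + ((j:ℕ)+1 : ℕ))
      rw [ih, ← h]
      congr 1
      push_cast; ring
  -- one-step bounds
  have hstep1 : ∀ (n : ℤ) (x : Fin m → ℝ), (∀ i, 0 ≤ x i) → x ≠ 0 → ∀ i : Fin m,
      Real.exp (-Ctil) * ‖x‖ ≤ ((A n).mulVec x) i ∧ ((A n).mulVec x) i ≤ Real.exp Ctil * ‖x‖ := by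
    intro n x hx hx0 i
    have h := hBP n (n-1) (by omega) x hx hx0 i
    have e : (n - (n-1)).toNat = 1 := by omega
    rw [e] at h
    have e2 : prodApply A (n-1) 1 x = (A n).mulVec x := by
      show (A (n - 1 + ((0:ℕ):ℤ) + 1)).mulVec (prodApply A (n-1) 0 x) = _
      norm_num [prodApply]
    rwa [e2] at h
  -- uniform lower bound on ‖u k‖
  have hlowk : ∀ k : ℤ, Real.exp (-Ctil) * ‖u 0‖ ≤ ‖u k‖ := by
    intro k
    have hexple : Real.exp (-Ctil) ≤ 1 := by
      rw [← Real.exp_zero]; exact Real.exp_le_exp.2 (by linarith)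
    rcases lt_trichotomy k 0 with hk | hk | hk
    · have h : ∀ i, u 0 i ≤ Real.exp Ctil * ‖u k‖ := by
        intro i
        have h2 := (hBP 0 k hk (u k) (hu_nonneg k) (hu_ne k) i).2
        have e : prodApply A k ((0:ℤ) - k).toNat (u k) = u 0 := by
          have e2 : k + (((0:ℤ) - k).toNat : ℤ) = 0 := by omega
          rw [hprod_u, e2]
        rwa [e] at h2
      have h0 : ‖u 0‖ ≤ Real.exp Ctil * ‖u k‖ := by
        refine hnormle _ _ (by positivity) fun i => ?_
        rw [abs_of_nonneg (hu_nonneg 0 i)]; exact h i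
      calc Real.exp (-Ctil) * ‖u 0‖ ≤ Real.exp (-Ctil) * (Real.exp Ctil * ‖u k‖) :=
            mul_le_mul_of_nonneg_left h0 (Real.exp_nonneg _)
        _ = ‖u k‖ := by rw [← mul_assoc, ← Real.exp_add]; simp
    · subst hk
      calc Real.exp (-Ctil) * ‖u 0‖ ≤ 1 * ‖u 0‖ :=
            mul_le_mul_of_nonneg_right hexple (norm_nonneg _)
        _ = ‖u 0‖ := one_mul _
    · have h := (hBP k 0 hk (u 0) (hu_nonneg 0) (hu_ne 0) i0).1
      have e : prodApply A 0 (k - 0).toNat (u 0) = u k := by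
        have e2 : (0:ℤ) + ((k - 0).toNat : ℤ) = k := by omega
        rw [hprod_u, e2]
      rw [e] at h
      exact h.trans ((le_abs_self _).trans (habs _ i0))
  -- uniform entrywise lower bound on u
  set c0 : ℝ := Real.exp (-Ctil) * (Real.exp (-Ctil) * ‖u 0‖) with hc0def
  have hc0pos : 0 < c0 := by rw [hc0def]; positivity
  have hc0 : ∀ (n : ℤ) (i : Fin m), c0 ≤ u n i := by
    intro n i
    have h := (hstep1 n (u (n-1)) (hu_nonneg _) (hu_ne _) i).1
    rw [← hu_rec n] at h
    refine le_trans ?_ h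
    rw [hc0def]
    exact mul_le_mul_of_nonneg_left (hlowk (n-1)) (Real.exp_nonneg _)
  have huM : ∀ (n : ℤ) (i : Fin m), u n i ≤ M :=
    fun n i => ((le_abs_self _).trans (habs _ i)).trans (hM n)
  have hu_ne' : ∀ (n : ℤ) (i : Fin m), u n i ≠ 0 :=
    fun n i => ne_of_gt (lt_of_lt_of_le hc0pos (hc0 n i))
  -- sums form of the recursions
  have hrec_sum : ∀ (n : ℤ) (i : Fin m), u n i = ∑ j, A n i j * u (n-1) j := by
    intro n i
    rw [hu_rec n]
    simp [Matrix.mulVec, dotProduct]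
  have hvrec_sum : ∀ (n : ℤ) (i : Fin m), v n i = ∑ j, A n i j * v (n-1) j := by
    intro n i
    rw [hv_rec n]
    simp [Matrix.mulVec, dotProduct]
  -- weights
  set δ : ℝ := εbar * c0 / M with hδdef
  have hδpos : 0 < δ := by rw [hδdef]; positivity
  set w : ℤ → Fin m → Fin m → ℝ := fun n i j => A n i j * u (n-1) j / u n i with hwdef
  have hwδ : ∀ (n : ℤ) (i j : Fin m), δ ≤ w n i j := by
    intro n i j
    have h1 : εbar * c0 ≤ A n i j * u (n-1) j :=
      mul_le_mul (hpos n i j) (hc0 (n-1) j) hc0pos.le (hε.le.trans (hpos n i j))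
    simp only [hwdef, hδdef]
    exact div_le_div₀ ((by positivity : (0:ℝ) < εbar * c0).le.trans h1) h1
      (lt_of_lt_of_le hc0pos (hc0 n i)) (huM n i)
  have hw0 : ∀ (n : ℤ) (i j : Fin m), 0 ≤ w n i j := fun n i j => hδpos.le.trans (hwδ n i j)
  have hwsum : ∀ (n : ℤ) (i : Fin m), ∑ j, w n i j = 1 := by
    intro n i
    simp only [hwdef]
    rw [← Finset.sum_div, ← hrec_sum n i, div_self (hu_ne' n i)]
  -- ratios
  set ρ : ℤ → Fin m → ℝ := fun n i => v n i / u n i with hρdef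
  set r : ℤ → ℝ := fun n => Finset.univ.sup' hne (ρ n) with hrdef
  set s : ℤ → ℝ := fun n => Finset.univ.inf' hne (ρ n) with hsdef
  have hρ_le_r : ∀ (n : ℤ) (i : Fin m), ρ n i ≤ r n := by
    intro n i; simp only [hrdef]; exact Finset.le_sup' _ (Finset.mem_univ i)
  have hs_le_ρ : ∀ (n : ℤ) (i : Fin m), s n ≤ ρ n i := by
    intro n i; simp only [hsdef]; exact Finset.inf'_le _ (Finset.mem_univ i)
  have hsr : ∀ n : ℤ, s n ≤ r n := fun n => (hs_le_ρ n i0).trans (hρ_le_r n i0)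
  have hreq : ∀ n : ℤ, ∃ j, r n = ρ n j := by
    intro n
    obtain ⟨j, -, hj⟩ := Finset.exists_mem_eq_sup' hne (ρ n)
    exact ⟨j, by simp only [hrdef]; exact hj⟩
  have hseq : ∀ n : ℤ, ∃ j, s n = ρ n j := by
    intro n
    obtain ⟨j, -, hj⟩ := Finset.exists_mem_eq_inf' hne (ρ n)
    exact ⟨j, by simp only [hsdef]; exact hj⟩
  -- convex-combination representation
  have hρ_rep : ∀ (n : ℤ) (i : Fin m), ρ n i = ∑ j, w n i j * ρ (n-1) j := by
    intro n i
    simp only [hρdef, hwdef]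
    rw [hvrec_sum n i, Finset.sum_div]
    refine Finset.sum_congr rfl fun j _ => ?_
    field_simp [hu_ne' n i, hu_ne' (n-1) j]
  -- contraction step
  have hstep : ∀ (n : ℤ) (i : Fin m),
      ρ n i ≤ r (n-1) - δ * (r (n-1) - s (n-1)) ∧
      s (n-1) + δ * (r (n-1) - s (n-1)) ≤ ρ n i := by
    intro n i
    obtain ⟨jmin, hjmin⟩ := hseq (n-1)
    obtain ⟨jmax, hjmax⟩ := hreq (n-1)
    have hsum_r : ∑ j, w n i j * r (n-1) = r (n-1) := by
      rw [← Finset.sum_mul, hwsum n i, one_mul]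
    have hsum_s : ∑ j, w n i j * s (n-1) = s (n-1) := by
      rw [← Finset.sum_mul, hwsum n i, one_mul]
    constructor
    · have hA : w n i jmin * (r (n-1) - s (n-1)) ≤ ∑ j, w n i j * (r (n-1) - ρ (n-1) j) := by
        have h := Finset.single_le_sum (f := fun j => w n i j * (r (n-1) - ρ (n-1) j))
          (fun j _ => mul_nonneg (hw0 n i j) (sub_nonneg.2 (hρ_le_r (n-1) j)))
          (Finset.mem_univ jmin)
        rwa [← hjmin] at h
      have expand : ∑ j, w n i j * (r (n-1) - ρ (n-1) j)
          = r (n-1) - ∑ j, w n i j * ρ (n-1) j := by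
        have e1 : ∀ j ∈ Finset.univ, w n i j * (r (n-1) - ρ (n-1) j)
            = w n i j * r (n-1) - w n i j * ρ (n-1) j := fun j _ => by ring
        rw [Finset.sum_congr rfl e1, Finset.sum_sub_distrib, hsum_r]
      rw [hρ_rep n i]
      have hδw : δ * (r (n-1) - s (n-1)) ≤ w n i jmin * (r (n-1) - s (n-1)) :=
        mul_le_mul_of_nonneg_right (hwδ n i jmin) (sub_nonneg.2 (hsr (n-1)))
      linarith [hA, hδw, expand]
    · have hA : w n i jmax * (r (n-1) - s (n-1)) ≤ ∑ j, w n i j * (ρ (n-1) j - s (n-1)) := by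
        have h := Finset.single_le_sum (f := fun j => w n i j * (ρ (n-1) j - s (n-1)))
          (fun j _ => mul_nonneg (hw0 n i j) (sub_nonneg.2 (hs_le_ρ (n-1) j)))
          (Finset.mem_univ jmax)
        rwa [← hjmax] at h
      have expand : ∑ j, w n i j * (ρ (n-1) j - s (n-1))
          = (∑ j, w n i j * ρ (n-1) j) - s (n-1) := by
        have e1 : ∀ j ∈ Finset.univ, w n i j * (ρ (n-1) j - s (n-1))
            = w n i j * ρ (n-1) j - w n i j * s (n-1) := fun j _ => by ring
        rw [Finset.sum_congr rfl e1, Finset.sum_sub_distrib, hsum_s]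
      rw [hρ_rep n i]
      have hδw : δ * (r (n-1) - s (n-1)) ≤ w n i jmax * (r (n-1) - s (n-1)) :=
        mul_le_mul_of_nonneg_right (hwδ n i jmax) (sub_nonneg.2 (hsr (n-1)))
      linarith [hA, hδw, expand]
  -- contraction factor
  set δ' : ℝ := min δ (1/2) with hδ'def
  set θ : ℝ := 1 - 2 * δ' with hθdef
  have hδ'le : δ' ≤ δ := by rw [hδ'def]; exact min_le_left _ _
  have hθ0 : 0 ≤ θ := by
    have : δ' ≤ 1/2 := by rw [hδ'def]; exact min_le_right _ _
    rw [hθdef]; linarith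
  have hθ1 : θ < 1 := by
    have : 0 < δ' := by rw [hδ'def]; exact lt_min hδpos (by norm_num)
    rw [hθdef]; linarith
  have hΔstep : ∀ n : ℤ, r n - s n ≤ θ * (r (n-1) - s (n-1)) := by
    intro n
    obtain ⟨j, hj⟩ := hreq n
    obtain ⟨j', hj'⟩ := hseq n
    have h1 := (hstep n j).1
    have h2 := (hstep n j').2
    have hd : 0 ≤ r (n-1) - s (n-1) := sub_nonneg.2 (hsr (n-1))
    have h12 : r n - s n ≤ (1 - 2*δ) * (r (n-1) - s (n-1)) := by
      rw [hj, hj']; linarith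
    have hmono : (1 - 2*δ) * (r (n-1) - s (n-1)) ≤ θ * (r (n-1) - s (n-1)) := by
      rw [hθdef]
      nlinarith [mul_nonneg (sub_nonneg.2 hδ'le) hd]
    linarith
  -- iterated contraction
  have hΔiter : ∀ (n : ℤ) (j : ℕ), r n - s n ≤ θ^j * (r (n - (j:ℤ)) - s (n - (j:ℤ))) := by
    intro n j
    induction j with
    | zero => simp
    | succ j ih =>
      have h := hΔstep (n - (j:ℤ))
      calc r n - s n ≤ θ^j * (r (n - (j:ℤ)) - s (n - (j:ℤ))) := ih
        _ ≤ θ^j * (θ * (r (n - (j:ℤ) - 1) - s (n - (j:ℤ) - 1))) :=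
            mul_le_mul_of_nonneg_left h (pow_nonneg hθ0 j)
        _ = θ^(j+1) * (r (n - ((j:ℕ)+1 : ℕ)) - s (n - ((j:ℕ)+1 : ℕ))) := by
            have e : n - (((j:ℕ)+1 : ℕ) : ℤ) = n - (j:ℤ) - 1 := by push_cast; ring
            rw [e, pow_succ]; ring
  -- Δ bounded by ‖v‖
  have hΔv : ∀ k : ℤ, r k - s k ≤ 2 / c0 * ‖v k‖ := by
    intro k
    have h1 : ∀ i, ρ k i ≤ ‖v k‖ / c0 := by
      intro i
      simp only [hρdef]
      exact div_le_div₀ (norm_nonneg _) ((le_abs_self _).trans (habs _ i)) hc0pos (hc0 k i)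
    have h2 : ∀ i, -(‖v k‖ / c0) ≤ ρ k i := by
      intro i
      simp only [hρdef]
      rw [neg_le, ← neg_div]
      exact div_le_div₀ (norm_nonneg _) ((neg_le_abs _).trans (habs _ i)) hc0pos (hc0 k i)
    obtain ⟨j, hj⟩ := hreq k
    obtain ⟨j', hj'⟩ := hseq k
    have e : 2 / c0 * ‖v k‖ = ‖v k‖ / c0 + ‖v k‖ / c0 := by ring
    rw [hj, hj', e]
    linarith [h1 j, h2 j']
  -- the limit argument: Δ ≡ 0
  have hΔ0 : ∀ n : ℤ, r n = s n := by
    intro n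
    have key : r n - s n ≤ 0 := by
      set θ'' : ℝ := max θ (1/2) with hθ''def
      have hθ''pos : 0 < θ'' := lt_of_lt_of_le (by norm_num) (le_max_right _ _)
      have hθ''lt : θ'' < 1 := by rw [hθ''def]; exact max_lt hθ1 (by norm_num)
      have hθθ'' : θ ≤ θ'' := by rw [hθ''def]; exact le_max_left _ _
      have hlogneg : Real.log θ'' < 0 := Real.log_neg hθ''pos hθ''lt
      set η : ℝ := -Real.log θ'' / 2 with hηdef
      have hηpos : 0 < η := by rw [hηdef]; linarith
      set q : ℝ := θ'' * Real.exp η with hqdef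
      have hq0 : 0 ≤ q := by rw [hqdef]; positivity
      have hq1 : q < 1 := by
        rw [hqdef]
        nth_rewrite 1 [← Real.exp_log hθ''pos]
        rw [← Real.exp_add]
        exact Real.exp_lt_one_iff.2 (by rw [hηdef]; linarith)
      obtain ⟨K0, hK0⟩ := eventually_atBot.1 (hv_subexp.eventually_lt_const hηpos)
      set K : ℤ := min K0 (-1) with hKdef
      have hKle : K ≤ -1 := min_le_right _ _
      have hvK : ∀ k : ℤ, k ≤ K → ‖v k‖ ≤ Real.exp (η * |(k:ℝ)|) := by
        intro k hk
        have h := hK0 k (hk.trans (min_le_left _ _))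
        have hkne : (0:ℝ) < |(k:ℝ)| := by
          have h1 : k ≠ 0 := by omega
          rw [abs_pos]
          exact_mod_cast h1
        have hlog : Real.log ‖v k‖ ≤ η * |(k:ℝ)| := by
          have h2 : Real.log ‖v k‖ = |(k:ℝ)| * ((|(k:ℝ)|)⁻¹ * Real.log ‖v k‖) := by
            field_simp
          rw [h2]
          calc |(k:ℝ)| * ((|(k:ℝ)|)⁻¹ * Real.log ‖v k‖) ≤ |(k:ℝ)| * η :=
                mul_le_mul_of_nonneg_left h.le (abs_nonneg _)
            _ = η * |(k:ℝ)| := mul_comm _ _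
        rcases eq_or_lt_of_le (norm_nonneg (v k)) with h0 | h0
        · rw [← h0]; exact (Real.exp_pos _).le
        · rw [← Real.exp_log h0]; exact Real.exp_le_exp.2 hlog
      set B : ℝ := 2 / c0 * Real.exp (η * |(n:ℝ)|) with hBdef
      have hJ : ∀ j : ℕ, (n - K).toNat ≤ j → r n - s n ≤ B * q ^ j := by
        intro j hj
        have hk : n - (j:ℤ) ≤ K := by
          have := Int.toNat_le.1 hj
          omega
        have c1 := hΔiter n j
        have c2 := hΔv (n - (j:ℤ))
        have c3 := hvK (n - (j:ℤ)) hk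
        have c4 : |((n - (j:ℤ) : ℤ) : ℝ)| ≤ |(n:ℝ)| + (j:ℝ) := by
          push_cast
          rw [sub_eq_add_neg]
          calc |(n:ℝ) + -(j:ℝ)| ≤ |(n:ℝ)| + |(-(j:ℝ))| := abs_add_le _ _
            _ = |(n:ℝ)| + (j:ℝ) := by rw [abs_neg, Nat.abs_cast]
        have c5 : Real.exp (η * |((n - (j:ℤ) : ℤ) : ℝ)|) ≤
            Real.exp (η * |(n:ℝ)|) * Real.exp η ^ j := by
          rw [← Real.exp_nat_mul, ← Real.exp_add]
          refine Real.exp_le_exp.2 ?_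
          have := mul_le_mul_of_nonneg_left c4 hηpos.le
          nlinarith [this]
        have hθj : θ^j ≤ θ''^j := pow_le_pow_left₀ hθ0 hθθ'' j
        have hΔk : 0 ≤ r (n - (j:ℤ)) - s (n - (j:ℤ)) := sub_nonneg.2 (hsr _)
        calc r n - s n ≤ θ^j * (r (n - (j:ℤ)) - s (n - (j:ℤ))) := c1
          _ ≤ θ''^j * (r (n - (j:ℤ)) - s (n - (j:ℤ))) := mul_le_mul_of_nonneg_right hθj hΔk
          _ ≤ θ''^j * (2 / c0 * ‖v (n - (j:ℤ))‖) :=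
              mul_le_mul_of_nonneg_left c2 (pow_nonneg hθ''pos.le j)
          _ ≤ θ''^j * (2 / c0 * (Real.exp (η * |(n:ℝ)|) * Real.exp η ^ j)) := by
              refine mul_le_mul_of_nonneg_left ?_ (pow_nonneg hθ''pos.le j)
              refine mul_le_mul_of_nonneg_left (c3.trans c5) (by positivity)
          _ = B * q ^ j := by rw [hBdef, hqdef, mul_pow]; ring
      have htend : Tendsto (fun j : ℕ => B * q ^ j) atTop (nhds 0) := by
        have h := (tendsto_pow_atTop_nhds_zero_of_lt_one hq0 hq1).const_mul B
        simpa using h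
      exact ge_of_tendsto htend (eventually_atTop.2 ⟨_, hJ⟩)
    exact le_antisymm (by linarith) (hsr n)
  -- all ratios equal r n
  have hρconst : ∀ (n : ℤ) (i : Fin m), ρ n i = r n := by
    intro n i
    refine le_antisymm (hρ_le_r n i) ?_
    rw [hΔ0 n]; exact hs_le_ρ n i
  -- r is constant
  have hrstep : ∀ n : ℤ, r n = r (n-1) := by
    intro n
    have h := (hstep n i0).1
    have h2 := (hstep n i0).2
    have e : r (n-1) - s (n-1) = 0 := by rw [hΔ0 (n-1)]; ring
    rw [e, mul_zero, sub_zero] at h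
    rw [e, mul_zero, add_zero] at h2
    have h3 : ρ n i0 = r (n-1) := le_antisymm h (by rw [hΔ0 (n-1)]; exact h2)
    rw [← hρconst n i0, h3]
  have hrall : ∀ n : ℤ, r n = r 0 := by
    intro n
    induction n using Int.induction_on with
    | zero => rfl
    | succ k ih =>
      have h := hrstep ((k:ℤ)+1)
      simp only [add_sub_cancel_right] at h
      rw [h, ih]
    | pred k ih =>
      rw [← hrstep (-(k:ℤ))]
      exact ih
  -- conclude
  have hveq : ∀ n : ℤ, v n = r 0 • u n := by
    intro n
    funext i
    have h : ρ n i = r 0 := by rw [hρconst n i, hrall n]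
    have h2 : v n i / u n i = r 0 := by simpa only [hρdef] using h
    have h3 : v n i = r 0 * u n i := by
      rw [← h2, div_mul_cancel₀ _ (hu_ne' n i)]
    rw [Pi.smul_apply, smul_eq_mul]
    exact h3
  refine ⟨⟨|r 0| * M, ?_⟩, ⟨r 0, hveq⟩⟩
  intro n
  rw [hveq n, norm_smul, Real.norm_eq_abs]
  exact mul_le_mul_of_nonneg_left (hM n) (abs_nonneg _)
end

section
/- Fix an integer m ≥ 1 and sequences (P_n), (Q_n), (R_n) of m×m real matrices, n ∈ ℤ. Suppose (ζ_n)_{n∈ℤ} is a sequence of m×m matrices such that I − R_n − Q_n ζ_{n−1} is invertible and ζ_n = (I − R_n − Q_n ζ_{n−1})^{−1} P_n for all n, and set A_n = (I − R_n − Q_n ζ_{n−1})^{−1} Q_n. If (𝔪_n)_{n∈ℤ} is a sequence of column vectors in ℝ^m satisfying 𝔪_n = P_n 𝔪_{n+1} + R_n 𝔪_n + Q_n 𝔪_{n−1} for all n, then the vectors u_n = 𝔪_n − ζ_n 𝔪_{n+1} satisfy u_n = A_n u_{n−1} for all n ∈ ℤ. -/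
/-- if `𝔪` solves the martingale equation then
`u_n = 𝔪_n − ζ_n 𝔪_{n+1}` satisfies `u_n = A_n u_{n−1}` where
`A_n = (I − R_n − Q_n ζ_{n−1})⁻¹ Q_n` (equation (4.2) in Lemma 4.1). -/
theorem martingale_difference_recursion (m : ℕ) (hm : 1 ≤ m)
    (P Q R ζ : ℤ → Matrix (Fin m) (Fin m) ℝ)
    (hinv : ∀ n : ℤ, IsUnit (1 - R n - Q n * ζ (n - 1)))
    (hζ : ∀ n : ℤ, ζ n = (1 - R n - Q n * ζ (n - 1))⁻¹ * P n)
    (𝔪 : ℤ → Fin m → ℝ)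
    (hmart : ∀ n : ℤ,
      𝔪 n = (P n).mulVec (𝔪 (n + 1)) + (R n).mulVec (𝔪 n) + (Q n).mulVec (𝔪 (n - 1))) :
    ∀ n : ℤ,
      𝔪 n - (ζ n).mulVec (𝔪 (n + 1)) =
        ((1 - R n - Q n * ζ (n - 1))⁻¹ * Q n).mulVec
          (𝔪 (n - 1) - (ζ (n - 1)).mulVec (𝔪 n)) := by
  intro n
  set M := 1 - R n - Q n * ζ (n - 1) with hM
  have hd : IsUnit M.det := (Matrix.isUnit_iff_isUnit_det M).mp (hinv n)
  have h1 : M⁻¹ * M = 1 := Matrix.nonsing_inv_mul M hd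
  have h2 : M * M⁻¹ = 1 := Matrix.mul_nonsing_inv M hd
  have hMζ : M * ζ n = P n := by rw [hζ n, ← hM, ← mul_assoc, h2, one_mul]
  have key : M.mulVec (𝔪 n - (ζ n).mulVec (𝔪 (n + 1))) =
      (Q n).mulVec (𝔪 (n - 1) - (ζ (n - 1)).mulVec (𝔪 n)) := by
    rw [Matrix.mulVec_sub, Matrix.mulVec_mulVec, hMζ, Matrix.mulVec_sub,
      Matrix.mulVec_mulVec, hM, Matrix.sub_mulVec, Matrix.sub_mulVec, Matrix.one_mulVec]
    nth_rewrite 1 [hmart n]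
    abel
  calc 𝔪 n - (ζ n).mulVec (𝔪 (n + 1))
      = (M⁻¹ * M).mulVec (𝔪 n - (ζ n).mulVec (𝔪 (n + 1))) := by
        rw [h1, Matrix.one_mulVec]
    _ = M⁻¹.mulVec (M.mulVec (𝔪 n - (ζ n).mulVec (𝔪 (n + 1)))) := by
        rw [Matrix.mulVec_mulVec]
    _ = (M⁻¹ * Q n).mulVec (𝔪 (n - 1) - (ζ (n - 1)).mulVec (𝔪 n)) := by
        rw [key, Matrix.mulVec_mulVec]
end

section
/- Fix an integer m ≥ 1 and sequences (P_n), (Q_n), (R_n) of m×m real matrices, n ∈ ℤ. Suppose: (ζ_n) are matrices with I − R_n − Q_n ζ_{n−1} invertible and ζ_n = (I − R_n − Q_n ζ_{n−1})^{−1} P_n; (ζ⁻_n) are matrices with I − R_n − P_n ζ⁻_{n+1} invertible and ζ⁻_n = (I − R_n − P_n ζ⁻_{n+1})^{−1} Q_n; α_n = Q_{n+1}(I − R_n − Q_n ζ_{n−1})^{−1} and α⁻_n = P_{n−1}(I − R_n − P_n ζ⁻_{n+1})^{−1}. Let (𝔪_n) be column vectors with 𝔪_n = P_n 𝔪_{n+1}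 + R_n 𝔪_n + Q_n 𝔪_{n−1} for all n, and let (ρ_n) be row vectors with ρ_n = ρ_{n−1}P_{n−1} + ρ_n R_n + ρ_{n+1}Q_{n+1}, ρ_n = ρ_{n+1} α_n, and ρ_{n+1} = ρ_n α⁻_{n+1} for all n. Then there exists a constant c ∈ ℝ such that for all n ∈ ℤ: ρ_{n+1} Q_{n+1} (𝔪_n − ζ_n 𝔪_{n+1}) = c and ρ_n P_n (𝔪_{n+1} − ζ⁻_{n+1} 𝔪_n) = −c. -/
open Matrix

/-- the "current" `ρ_{n+1} Q_{n+1} (𝔪_n − ζ_n 𝔪_{n+1})` is a constant `c`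
independent of `n`, and `ρ_n P_n (𝔪_{n+1} − ζ⁻_{n+1} 𝔪_n) = −c` (Lemma 4.1). -/
theorem current_is_constant (m : ℕ) (hm : 1 ≤ m)
    (P Q R ζ ζm : ℤ → Matrix (Fin m) (Fin m) ℝ)
    (hζinv : ∀ n : ℤ, IsUnit (1 - R n - Q n * ζ (n - 1)))
    (hζ : ∀ n : ℤ, ζ n = (1 - R n - Q n * ζ (n - 1))⁻¹ * P n)
    (hζminv : ∀ n : ℤ, IsUnit (1 - R n - P n * ζm (n + 1)))
    (hζm : ∀ n : ℤ, ζm n = (1 - R n - P n * ζm (n + 1))⁻¹ * Q n)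
    (𝔪 : ℤ → Fin m → ℝ)
    (hmart : ∀ n : ℤ,
      𝔪 n = (P n).mulVec (𝔪 (n + 1)) + (R n).mulVec (𝔪 n) + (Q n).mulVec (𝔪 (n - 1)))
    (ρ : ℤ → Fin m → ℝ)
    (hρ : ∀ n : ℤ,
      ρ n = Matrix.vecMul (ρ (n - 1)) (P (n - 1)) + Matrix.vecMul (ρ n) (R n)
          + Matrix.vecMul (ρ (n + 1)) (Q (n + 1)))
    (hρα : ∀ n : ℤ,
      ρ n = Matrix.vecMul (ρ (n + 1)) (Q (n + 1) * (1 - R n - Q n * ζ (n - 1))⁻¹))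
    (hραm : ∀ n : ℤ,
      ρ (n + 1) = Matrix.vecMul (ρ n)
        (P n * (1 - R (n + 1) - P (n + 1) * ζm (n + 2))⁻¹)) :
    ∃ c : ℝ, ∀ n : ℤ,
      (∑ i, Matrix.vecMul (ρ (n + 1)) (Q (n + 1)) i *
          (𝔪 n - (ζ n).mulVec (𝔪 (n + 1))) i) = c ∧
      (∑ i, Matrix.vecMul (ρ n) (P n) i *
          (𝔪 (n + 1) - (ζm (n + 1)).mulVec (𝔪 n)) i) = -c := by
  set A : ℤ → Matrix (Fin m) (Fin m) ℝ := fun n => 1 - R n - Q n * ζ (n - 1) with hA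
  set B : ℤ → Matrix (Fin m) (Fin m) ℝ := fun n => 1 - R n - P n * ζm (n + 1) with hB
  set J : ℤ → ℝ := fun n =>
    Matrix.vecMul (ρ (n + 1)) (Q (n + 1)) ⬝ᵥ (𝔪 n - (ζ n).mulVec (𝔪 (n + 1))) with hJ
  set K : ℤ → ℝ := fun n =>
    Matrix.vecMul (ρ n) (P n) ⬝ᵥ (𝔪 (n + 1) - (ζm (n + 1)).mulVec (𝔪 n)) with hK
  have hAdet : ∀ n, IsUnit (A n).det := fun n =>
    (Matrix.isUnit_iff_isUnit_det _).mp (hζinv n)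
  have hBdet : ∀ n, IsUnit (B n).det := fun n =>
    (Matrix.isUnit_iff_isUnit_det _).mp (hζminv n)
  -- ρ_n A_n = ρ_{n+1} Q_{n+1}
  have hρA : ∀ n, Matrix.vecMul (ρ n) (A n) = Matrix.vecMul (ρ (n + 1)) (Q (n + 1)) := by
    intro n
    conv_lhs => rw [hρα n]
    rw [Matrix.vecMul_vecMul, Matrix.mul_assoc,
      Matrix.nonsing_inv_mul _ (hAdet n), Matrix.mul_one]
  -- ρ_{n+1} B_{n+1} = ρ_n P_n
  have hρB : ∀ n, Matrix.vecMul (ρ (n + 1)) (B (n + 1)) = Matrix.vecMul (ρ n) (P n) := by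
    intro n
    have h2 : (n : ℤ) + 1 + 1 = n + 2 := by ring
    conv_lhs => rw [hραm n]
    rw [Matrix.vecMul_vecMul, Matrix.mul_assoc, hB]
    simp only [h2]
    rw [Matrix.nonsing_inv_mul _ (by have := hBdet (n + 1); simpa [hB, h2] using this),
      Matrix.mul_one]
  -- A_n ζ_n = P_n
  have hAζ : ∀ n, A n * ζ n = P n := by
    intro n
    rw [hζ n, ← Matrix.mul_assoc, Matrix.mul_nonsing_inv _ (hAdet n), Matrix.one_mul]
  -- B_{n+1} ζm_{n+1} = Q_{n+1}
  have hBζ : ∀ n : ℤ, B (n + 1) * ζm (n + 1) = Q (n + 1) := by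
    intro n
    rw [hζm (n + 1), ← Matrix.mul_assoc, Matrix.mul_nonsing_inv _ (hBdet (n + 1)),
      Matrix.one_mul]
  -- A_n 𝔪_n = P_n 𝔪_{n+1} + Q_n (𝔪_{n-1} - ζ_{n-1} 𝔪_n)
  have hAm : ∀ n, (A n).mulVec (𝔪 n)
      = (P n).mulVec (𝔪 (n + 1)) + (Q n).mulVec (𝔪 (n - 1) - (ζ (n - 1)).mulVec (𝔪 n)) := by
    intro n
    have h := hmart n
    rw [hA]
    simp only [Matrix.sub_mulVec, Matrix.one_mulVec, Matrix.mulVec_sub,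
      ← Matrix.mulVec_mulVec]
    nth_rewrite 1 [h]
    abel
  -- B_{n+1} 𝔪_{n+1} = Q_{n+1} 𝔪_n + P_{n+1} (𝔪_{n+2} - ζm_{n+2} 𝔪_{n+1})
  have hBm : ∀ n : ℤ, (B (n + 1)).mulVec (𝔪 (n + 1))
      = (Q (n + 1)).mulVec (𝔪 n)
        + (P (n + 1)).mulVec (𝔪 (n + 2) - (ζm (n + 2)).mulVec (𝔪 (n + 1))) := by
    intro n
    have h := hmart (n + 1)
    have e1 : (n : ℤ) + 1 - 1 = n := by ring
    have e2 : (n : ℤ) + 1 + 1 = n + 2 := by ring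
    rw [e1, e2] at h
    rw [hB]
    simp only [e2, Matrix.sub_mulVec, Matrix.one_mulVec, Matrix.mulVec_sub,
      ← Matrix.mulVec_mulVec]
    nth_rewrite 1 [h]
    abel
  -- J n = J (n-1)
  have hJstep : ∀ n : ℤ, J n = J (n - 1) := by
    intro n
    have e1 : (n : ℤ) - 1 + 1 = n := by ring
    calc J n = Matrix.vecMul (ρ n) (A n) ⬝ᵥ (𝔪 n - (ζ n).mulVec (𝔪 (n + 1))) := by
          rw [hJ]; simp only [hρA n]
      _ = ρ n ⬝ᵥ (A n).mulVec (𝔪 n - (ζ n).mulVec (𝔪 (n + 1))) := by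
          rw [Matrix.dotProduct_mulVec]
      _ = ρ n ⬝ᵥ (Q n).mulVec (𝔪 (n - 1) - (ζ (n - 1)).mulVec (𝔪 n)) := by
          rw [Matrix.mulVec_sub, hAm n, Matrix.mulVec_mulVec, hAζ n]
          congr 1
          abel
      _ = J (n - 1) := by
          rw [hJ]; simp only [e1]; rw [Matrix.dotProduct_mulVec]
  -- K n = K (n+1)
  have hKstep : ∀ n : ℤ, K n = K (n + 1) := by
    intro n
    calc K n = Matrix.vecMul (ρ (n + 1)) (B (n + 1)) ⬝ᵥ (𝔪 (n + 1) - (ζm (n + 1)).mulVec (𝔪 n)) := by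
          rw [hK]; simp only [hρB n]
      _ = ρ (n + 1) ⬝ᵥ (B (n + 1)).mulVec (𝔪 (n + 1) - (ζm (n + 1)).mulVec (𝔪 n)) := by
          rw [Matrix.dotProduct_mulVec]
      _ = ρ (n + 1) ⬝ᵥ (P (n + 1)).mulVec (𝔪 (n + 2) - (ζm (n + 2)).mulVec (𝔪 (n + 1))) := by
          rw [Matrix.mulVec_sub, hBm n, Matrix.mulVec_mulVec, hBζ n]
          congr 1
          abel
      _ = K (n + 1) := by
          have e2 : (n : ℤ) + 1 + 1 = n + 2 := by ring
          rw [hK]; simp only [e2]; rw [Matrix.dotProduct_mulVec]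
  -- K n = - J n
  have hKJ : ∀ n : ℤ, K n = -J n := by
    intro n
    have t1 : Matrix.vecMul (ρ (n + 1)) (Q (n + 1)) ⬝ᵥ (ζ n).mulVec (𝔪 (n + 1))
        = Matrix.vecMul (ρ n) (P n) ⬝ᵥ 𝔪 (n + 1) := by
      rw [← hρA n, ← Matrix.dotProduct_mulVec, Matrix.mulVec_mulVec, hAζ n,
        Matrix.dotProduct_mulVec]
    have t2 : Matrix.vecMul (ρ n) (P n) ⬝ᵥ (ζm (n + 1)).mulVec (𝔪 n)
        = Matrix.vecMul (ρ (n + 1)) (Q (n + 1)) ⬝ᵥ 𝔪 n := by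
      rw [← hρB n, ← Matrix.dotProduct_mulVec, Matrix.mulVec_mulVec, hBζ n,
        Matrix.dotProduct_mulVec]
    rw [hJ, hK]
    simp only [dotProduct_sub, t1, t2]
    ring
  -- J is constant
  have hJconst : ∀ n : ℤ, J n = J 0 := by
    intro n
    induction n using Int.induction_on with
    | zero => rfl
    | succ k ih =>
        have h := hJstep ((k : ℤ) + 1)
        rw [show ((k : ℤ) + 1 - 1) = (k : ℤ) by ring] at h
        exact h.trans ih
    | pred k ih =>
        have h := hJstep (-(k : ℤ))
        have e : (-(k : ℤ)) - 1 = -((k : ℤ) + 1) := by ring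
        rw [e] at h
        rw [show (-(k : ℤ) - 1) = -((k : ℤ) + 1) from e, ← h]; exact ih
  refine ⟨J 0, fun n => ⟨?_, ?_⟩⟩
  · have : J n = J 0 := hJconst n
    simpa [hJ, dotProduct] using this
  · have : K n = -J 0 := by rw [hKJ n, hJconst n]
    simpa [hK, dotProduct] using this
end

section
/- Fix an integer m ≥ 1, ε̄ > 0 and K > 0. Let (ζ_n)_{n∈ℤ} be row-stochastic m×m matrices with ζ_n(i,j) ≥ ε̄ for all n, i, j, and let (𝔪_n)_{n∈ℤ} be column vectors in ℝ^m satisfying 𝔪_n = ζ_n 𝔪_{n+1} for all n ∈ ℤ and the bounded-increments condition |𝔪_{n'}(i') − 𝔪_{n''}(i'')| ≤ K whenever |n' − n''| ≤ 1. Then there exists c ∈ ℝ such that 𝔪_n = c·𝟏 for all n ∈ ℤ, where 𝟏 is the all-ones vector. -/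
/-- if `𝔪_n = ζ_n 𝔪_{n+1}` for uniformly elliptic row-stochastic
matrices `ζ_n` and `𝔪` has bounded increments, then `𝔪` is constant
(case (1) after Lemma 4.2). -/
theorem trivial_martingale_is_constant (m : ℕ) (hm : 1 ≤ m) (εbar K : ℝ)
    (hε : 0 < εbar) (hK : 0 < K)
    (ζ : ℤ → Matrix (Fin m) (Fin m) ℝ)
    (hζ_pos : ∀ (n : ℤ) (i j : Fin m), εbar ≤ ζ n i j)
    (hζ_rowsum : ∀ (n : ℤ) (i : Fin m), ∑ j, ζ n i j = 1)
    (𝔪 : ℤ → Fin m → ℝ)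
    (hrec : ∀ n : ℤ, 𝔪 n = (ζ n).mulVec (𝔪 (n + 1)))
    (hinc : ∀ (n' n'' : ℤ) (i' i'' : Fin m), |n' - n''| ≤ 1 →
      |𝔪 n' i' - 𝔪 n'' i''| ≤ K) :
    ∃ c : ℝ, ∀ (n : ℤ) (i : Fin m), 𝔪 n i = c := by
  have i0 : Fin m := ⟨0, hm⟩
  have hmpos : (0:ℝ) < m := by exact_mod_cast Nat.lt_of_lt_of_le Nat.zero_lt_one hm
  have hsum : ∀ (n : ℤ) (i : Fin m), 𝔪 n i = ∑ j, ζ n i j * 𝔪 (n+1) j := by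
    intro n i
    rw [hrec n]
    simp [Matrix.mulVec, dotProduct]
  have hle1 : m * εbar ≤ 1 := by
    have : ∑ _j : Fin m, εbar ≤ ∑ j, ζ 0 i0 j := Finset.sum_le_sum fun j _ => hζ_pos 0 i0 j
    rw [hζ_rowsum 0 i0] at this
    simpa using this
  have hr0 : 0 ≤ 1 - m * εbar := by linarith
  have hr1 : 1 - m * εbar < 1 := by nlinarith
  have key : ∀ (k : ℕ) (n : ℤ) (i i' : Fin m),
      𝔪 n i - 𝔪 n i' ≤ (1 - m * εbar)^k * K := by
    intro k
    induction k with
    | zero =>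
      intro n i i'
      have := (abs_le.mp (hinc n n i i' (by simp))).2
      simpa using this
    | succ k ih =>
      intro n i i'
      have hBnonneg : 0 ≤ (1 - m * εbar)^k * K :=
        mul_nonneg (pow_nonneg hr0 k) hK.le
      obtain ⟨j0, -, hj0⟩ := Finset.exists_min_image Finset.univ (𝔪 (n+1))
        ⟨i, Finset.mem_univ i⟩
      have hv : ∀ j, 0 ≤ 𝔪 (n+1) j - 𝔪 (n+1) j0 :=
        fun j => sub_nonneg.mpr (hj0 j (Finset.mem_univ j))
      have e : 𝔪 n i - 𝔪 n i' =
          ∑ j, (ζ n i j - ζ n i' j) * (𝔪 (n+1) j - 𝔪 (n+1) j0) := by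
        have h1 := hζ_rowsum n i
        have h2 := hζ_rowsum n i'
        rw [hsum n i, hsum n i']
        simp only [sub_mul, mul_sub, Finset.sum_sub_distrib, ← Finset.sum_mul, h1, h2]
        ring
      rw [e]
      have step1 : ∑ j, (ζ n i j - ζ n i' j) * (𝔪 (n+1) j - 𝔪 (n+1) j0)
          ≤ ∑ j, (ζ n i j - εbar) * ((1 - m * εbar)^k * K) := by
        apply Finset.sum_le_sum
        intro j _
        have h1 : (ζ n i j - ζ n i' j) * (𝔪 (n+1) j - 𝔪 (n+1) j0)
            ≤ (ζ n i j - εbar) * (𝔪 (n+1) j - 𝔪 (n+1) j0) := by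
          apply mul_le_mul_of_nonneg_right _ (hv j)
          linarith [hζ_pos n i' j]
        have h2 : (ζ n i j - εbar) * (𝔪 (n+1) j - 𝔪 (n+1) j0)
            ≤ (ζ n i j - εbar) * ((1 - m * εbar)^k * K) := by
          apply mul_le_mul_of_nonneg_left _ (by linarith [hζ_pos n i j])
          have := ih (n+1) j j0
          linarith
        linarith
      have step2 : ∑ j, (ζ n i j - εbar) * ((1 - m * εbar)^k * K)
          = (1 - m * εbar)^(k+1) * K := by
        rw [← Finset.sum_mul, Finset.sum_sub_distrib, hζ_rowsum n i]
        simp [Finset.sum_const, Finset.card_univ]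
        ring
      linarith
  have hconst_i : ∀ (n : ℤ) (i i' : Fin m), 𝔪 n i = 𝔪 n i' := by
    intro n i i'
    by_contra h
    have habs : 0 < |𝔪 n i - 𝔪 n i'| := abs_pos.mpr (sub_ne_zero.mpr h)
    obtain ⟨k, hk⟩ := exists_pow_lt_of_lt_one (div_pos habs hK) hr1
    have hk' : (1 - m * εbar)^k * K < |𝔪 n i - 𝔪 n i'| := by
      rw [← lt_div_iff₀ hK]; exact hk
    have h1 := key k n i i'
    have h2 := key k n i' i
    have := abs_sub_le_iff.mpr ⟨h1, h2⟩
    linarith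
  refine ⟨𝔪 0 i0, ?_⟩
  have hstep : ∀ n : ℤ, 𝔪 n i0 = 𝔪 (n+1) i0 := by
    intro n
    rw [hsum n i0]
    calc ∑ j, ζ n i0 j * 𝔪 (n+1) j = ∑ j, ζ n i0 j * 𝔪 (n+1) i0 := by
          apply Finset.sum_congr rfl
          intro j _
          rw [hconst_i (n+1) j i0]
      _ = 𝔪 (n+1) i0 := by rw [← Finset.sum_mul, hζ_rowsum n i0, one_mul]
  have hall : ∀ n : ℤ, 𝔪 n i0 = 𝔪 0 i0 := by
    intro n
    induction n using Int.induction_on with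
    | zero => rfl
    | succ k ih => rw [← hstep k, ih]
    | pred k ih => rw [hstep (-(k:ℤ) - 1)]; simpa using ih
  intro n i
  rw [hconst_i n i i0, hall n]
end
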